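/- arXiv:1009.1783 — 4 statements merged into one kernel-verified Lean document; each statement's English description precedes it below -/
import Mathlib

section
/- Let φ be a nonnegative piecewise-linear function with integer slopes on Σ satisfying conditions (1)–(3) with respect to m ∈ ℤ^n. Suppose v is a trivalent vertex (deg(v) = 3) at which Σ is balanced (Σ_{e ∋ v} d_v(e) = 0) and which has an adjacent edge e₁ with m·e₁ ≠ 0. Then v has at most one adjacent edge e with m·e = 0, and for such an edge the slope satisfies s_φ(v,e) = 1. -/
attribute [local instance] Classical.propDecidable

/-- A finite graph `Σ` with bounded edges (each joining two distinct vertices)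
and unbounded edges (leaves, each attached to a single vertex).  Each bounded
edge `e` carries a direction vector `dir e ∈ ℤ^n` at its source (the direction
at the target endpoint is `-dir e`), and each unbounded edge `u` carries a
direction vector `udir u` at its attaching vertex. -/
structure TropGraph (n : ℕ) where
  V : Type
  BE : Type
  UE : Type
  [fintV : Fintype V]
  [fintBE : Fintype BE]
  [fintUE : Fintype UE]
  src : BE → V
  tgt : BE → V
  src_ne_tgt : ∀ e, src e ≠ tgt e
  att : UE → V
  dir : BE → Fin n → ℤ
  udir : UE → Fin n → ℤ

attribute [instance] TropGraph.fintV TropGraph.fintBE TropGraph.fintUE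

/-- `⟨m, d⟩ = Σ i, m i * d i`. -/
def pairDot {n : ℕ} (m d : Fin n → ℤ) : ℤ := ∑ i, m i * d i

namespace TropGraph

variable {n : ℕ}

/-- The degree of a vertex: the number of edge-endpoints at `v`. -/
noncomputable def degree (G : TropGraph n) (v : G.V) : ℕ :=
  (Finset.univ.filter (fun e => G.src e = v)).card +
    (Finset.univ.filter (fun e => G.tgt e = v)).card +
    (Finset.univ.filter (fun u => G.att u = v)).card

/-- A piecewise-linear function on `Σ` with integer slopes: real values at the
vertices, differing by integers along bounded edges (which have length 1, so the
slope of `φ` at `src e` along a bounded edge `e` is `φ(tgt e) - φ(src e)`),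
together with an assigned integer slope on each unbounded edge. -/
structure PL (G : TropGraph n) where
  val : G.V → ℝ
  uslope : G.UE → ℤ
  int_slope : ∀ e : G.BE, ∃ k : ℤ, val (G.tgt e) - val (G.src e) = (k : ℝ)

namespace PL

variable {G : TropGraph n}

/-- `φ` is nonnegative: all vertex values and all slopes on unbounded edges are `≥ 0`. -/
def Nonneg (φ : PL G) : Prop := (∀ v, 0 ≤ φ.val v) ∧ ∀ u, 0 ≤ φ.uslope u

/-- The sum `Σ_{e ∋ v} s_φ(v,e)` of the slopes of `φ` at `v` along all edges at `v`,
so that the Laplacian is `Δ(φ)(v) = -slopeSum φ v`. -/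
noncomputable def slopeSum (φ : PL G) (v : G.V) : ℝ :=
  (∑ e ∈ Finset.univ.filter (fun e => G.src e = v), (φ.val (G.tgt e) - φ.val (G.src e))) +
    (∑ e ∈ Finset.univ.filter (fun e => G.tgt e = v), (φ.val (G.src e) - φ.val (G.tgt e))) +
    ∑ u ∈ Finset.univ.filter (fun u => G.att u = v), (φ.uslope u : ℝ)

/-- Condition (1): `Δ(φ) + K_Σ ≥ 0`, i.e. `Σ_{e ∋ v} s_φ(v,e) ≤ deg v - 2` for all `v`. -/
def CanonicalBound (φ : PL G) : Prop := ∀ v : G.V, φ.slopeSum v ≤ (G.degree v : ℝ) - 2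

/-- Condition (2): `φ` vanishes identically on every edge `e` with `m·e ≠ 0`. -/
def VanishesNonOrth (φ : PL G) (m : Fin n → ℤ) : Prop :=
  (∀ e : G.BE, pairDot m (G.dir e) ≠ 0 → φ.val (G.src e) = 0 ∧ φ.val (G.tgt e) = 0) ∧
    ∀ u : G.UE, pairDot m (G.udir u) ≠ 0 → φ.val (G.att u) = 0 ∧ φ.uslope u = 0

/-- Condition (3): on every edge `e` with `m·e = 0` the slope of `φ` is nonzero. -/
def NonzeroSlopeOrth (φ : PL G) (m : Fin n → ℤ) : Prop :=
  (∀ e : G.BE, pairDot m (G.dir e) = 0 → φ.val (G.src e) ≠ φ.val (G.tgt e)) ∧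
    ∀ u : G.UE, pairDot m (G.udir u) = 0 → φ.uslope u ≠ 0

end PL

end TropGraph

open TropGraph in
/-- let `φ` be a nonnegative piecewise-linear function with integer slopes
on `Σ` satisfying conditions (1)–(3) with respect to `m ∈ ℤ^n`.  If `v` is a trivalent
vertex (`deg v = 3`) at which `Σ` is balanced (`Σ_{e ∋ v} d_v(e) = 0`) and which has an
adjacent edge `e₁` with `m·e₁ ≠ 0`, then `v` has at most one adjacent edge `e` with
`m·e = 0`, and for such an edge the slope satisfies `s_φ(v,e) = 1`. -/
theorem trivalent_at_most_one_orth_edge_and_slope_eq_one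
    {n : ℕ} (G : TropGraph n) (φ : TropGraph.PL G) (m : Fin n → ℤ)
    (hnn : φ.Nonneg) (h1 : φ.CanonicalBound)
    (h2 : φ.VanishesNonOrth m) (h3 : φ.NonzeroSlopeOrth m) (v : G.V)
    (htri : G.degree v = 3)
    (hbal : (∑ e ∈ Finset.univ.filter (fun e => G.src e = v), G.dir e) -
        (∑ e ∈ Finset.univ.filter (fun e => G.tgt e = v), G.dir e) +
        (∑ u ∈ Finset.univ.filter (fun u => G.att u = v), G.udir u) = 0)
    (he₁ : (∃ e₁ : G.BE, (G.src e₁ = v ∨ G.tgt e₁ = v) ∧ pairDot m (G.dir e₁) ≠ 0) ∨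
      ∃ u₁ : G.UE, G.att u₁ = v ∧ pairDot m (G.udir u₁) ≠ 0) :
    ((Finset.univ.filter
        (fun e => (G.src e = v ∨ G.tgt e = v) ∧ pairDot m (G.dir e) = 0)).card +
      (Finset.univ.filter
        (fun u => G.att u = v ∧ pairDot m (G.udir u) = 0)).card ≤ 1) ∧
      (∀ e : G.BE, G.src e = v → pairDot m (G.dir e) = 0 →
        φ.val (G.tgt e) - φ.val (G.src e) = 1) ∧
      (∀ e : G.BE, G.tgt e = v → pairDot m (G.dir e) = 0 →
        φ.val (G.src e) - φ.val (G.tgt e) = 1) ∧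
      ∀ u : G.UE, G.att u = v → pairDot m (G.udir u) = 0 → φ.uslope u = 1 := by
  classical
  -- φ(v) = 0
  have hv0 : φ.val v = 0 := by
    rcases he₁ with ⟨e, he, hm⟩ | ⟨u, hu, hm⟩
    · rcases h2.1 e hm with ⟨ha, hb⟩
      rcases he with h | h
      · rw [← h]; exact ha
      · rw [← h]; exact hb
    · rw [← hu]; exact (h2.2 u hm).1
  set A := Finset.univ.filter (fun e => G.src e = v) with hA
  set B := Finset.univ.filter (fun e => G.tgt e = v) with hB
  set C := Finset.univ.filter (fun u => G.att u = v) with hC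
  have hApos : ∀ e ∈ A, (0:ℝ) ≤ φ.val (G.tgt e) - φ.val (G.src e) := by
    intro e he
    have h : G.src e = v := by simpa [hA] using he
    have := hnn.1 (G.tgt e)
    rw [h, hv0]; linarith
  have hBpos : ∀ e ∈ B, (0:ℝ) ≤ φ.val (G.src e) - φ.val (G.tgt e) := by
    intro e he
    have h : G.tgt e = v := by simpa [hB] using he
    have := hnn.1 (G.src e)
    rw [h, hv0]; linarith
  have hCpos : ∀ u ∈ C, (0:ℝ) ≤ (φ.uslope u : ℝ) := by
    intro u _; exact_mod_cast hnn.2 u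
  -- orthogonal edges at v have slope ≥ 1
  have hAone : ∀ e ∈ A, pairDot m (G.dir e) = 0 →
      (1:ℝ) ≤ φ.val (G.tgt e) - φ.val (G.src e) := by
    intro e he hm
    obtain ⟨k, hk⟩ := φ.int_slope e
    have hne : φ.val (G.tgt e) - φ.val (G.src e) ≠ 0 :=
      sub_ne_zero.mpr (Ne.symm (h3.1 e hm))
    have h0 : (0:ℝ) ≤ φ.val (G.tgt e) - φ.val (G.src e) := hApos e he
    have hk0 : k ≠ 0 := by rintro rfl; rw [hk] at hne; simp at hne
    have hk0' : (0:ℤ) ≤ k := by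
      have : (0:ℝ) ≤ (k:ℝ) := hk ▸ h0
      exact_mod_cast this
    have : (1:ℤ) ≤ k := by omega
    rw [hk]; exact_mod_cast this
  have hBone : ∀ e ∈ B, pairDot m (G.dir e) = 0 →
      (1:ℝ) ≤ φ.val (G.src e) - φ.val (G.tgt e) := by
    intro e he hm
    obtain ⟨k, hk⟩ := φ.int_slope e
    have hne : φ.val (G.src e) - φ.val (G.tgt e) ≠ 0 :=
      sub_ne_zero.mpr (h3.1 e hm)
    have h0 : (0:ℝ) ≤ φ.val (G.src e) - φ.val (G.tgt e) := hBpos e he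
    have hk' : φ.val (G.src e) - φ.val (G.tgt e) = ((-k : ℤ) : ℝ) := by
      push_cast; linarith
    have hk0 : (-k : ℤ) ≠ 0 := by
      rintro h; rw [hk'] at hne; rw [h] at hne; simp at hne
    have hk0' : (0:ℤ) ≤ -k := by
      have : (0:ℝ) ≤ ((-k:ℤ):ℝ) := hk' ▸ h0
      exact_mod_cast this
    have : (1:ℤ) ≤ -k := by omega
    rw [hk']; exact_mod_cast this
  have hCone : ∀ u ∈ C, pairDot m (G.udir u) = 0 → (1:ℝ) ≤ (φ.uslope u : ℝ) := by
    intro u _ hm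
    have h0 := hnn.2 u
    have hne := h3.2 u hm
    have : (1:ℤ) ≤ φ.uslope u := by omega
    exact_mod_cast this
  -- the total slope sum at v is ≤ 1
  have hsum : (∑ e ∈ A, (φ.val (G.tgt e) - φ.val (G.src e))) +
      (∑ e ∈ B, (φ.val (G.src e) - φ.val (G.tgt e))) +
      (∑ u ∈ C, (φ.uslope u : ℝ)) ≤ 1 := by
    have := h1 v
    rw [htri] at this
    unfold TropGraph.PL.slopeSum at this
    rw [← hA, ← hB, ← hC] at this
    push_cast at this
    rw [Finset.sum_sub_distrib, Finset.sum_sub_distrib] at this ⊢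
    linarith
  have hSA : (0:ℝ) ≤ ∑ e ∈ A, (φ.val (G.tgt e) - φ.val (G.src e)) :=
    Finset.sum_nonneg hApos
  have hSB : (0:ℝ) ≤ ∑ e ∈ B, (φ.val (G.src e) - φ.val (G.tgt e)) :=
    Finset.sum_nonneg hBpos
  have hSC : (0:ℝ) ≤ ∑ u ∈ C, (φ.uslope u : ℝ) :=
    Finset.sum_nonneg hCpos
  -- cardinality bounds
  set A' := A.filter (fun e => pairDot m (G.dir e) = 0) with hA'
  set B' := B.filter (fun e => pairDot m (G.dir e) = 0) with hB'
  set C' := C.filter (fun u => pairDot m (G.udir u) = 0) with hC'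
  have hcardA : (A'.card : ℝ) ≤ ∑ e ∈ A, (φ.val (G.tgt e) - φ.val (G.src e)) := by
    calc (A'.card : ℝ) = ∑ _e ∈ A', (1:ℝ) := by simp
    _ ≤ ∑ e ∈ A', (φ.val (G.tgt e) - φ.val (G.src e)) := by
        apply Finset.sum_le_sum
        intro e he
        exact hAone e (Finset.filter_subset _ _ he) (Finset.mem_filter.mp he).2
    _ ≤ ∑ e ∈ A, (φ.val (G.tgt e) - φ.val (G.src e)) := by
        apply Finset.sum_le_sum_of_subset_of_nonneg (Finset.filter_subset _ _)
        intro e he _; exact hApos e he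
  have hcardB : (B'.card : ℝ) ≤ ∑ e ∈ B, (φ.val (G.src e) - φ.val (G.tgt e)) := by
    calc (B'.card : ℝ) = ∑ _e ∈ B', (1:ℝ) := by simp
    _ ≤ ∑ e ∈ B', (φ.val (G.src e) - φ.val (G.tgt e)) := by
        apply Finset.sum_le_sum
        intro e he
        exact hBone e (Finset.filter_subset _ _ he) (Finset.mem_filter.mp he).2
    _ ≤ ∑ e ∈ B, (φ.val (G.src e) - φ.val (G.tgt e)) := by
        apply Finset.sum_le_sum_of_subset_of_nonneg (Finset.filter_subset _ _)
        intro e he _; exact hBpos e he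
  have hcardC : (C'.card : ℝ) ≤ ∑ u ∈ C, (φ.uslope u : ℝ) := by
    calc (C'.card : ℝ) = ∑ _u ∈ C', (1:ℝ) := by simp
    _ ≤ ∑ u ∈ C', (φ.uslope u : ℝ) := by
        apply Finset.sum_le_sum
        intro u hu
        exact hCone u (Finset.filter_subset _ _ hu) (Finset.mem_filter.mp hu).2
    _ ≤ ∑ u ∈ C, (φ.uslope u : ℝ) := by
        apply Finset.sum_le_sum_of_subset_of_nonneg (Finset.filter_subset _ _)
        intro u hu _; exact hCpos u hu
  have hcards : A'.card + B'.card + C'.card ≤ 1 := by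
    have : ((A'.card + B'.card + C'.card : ℕ) : ℝ) ≤ 1 := by
      push_cast; linarith
    exact_mod_cast this
  refine ⟨?_, ?_, ?_, ?_⟩
  · -- count bound
    have hsub : (Finset.univ.filter
        (fun e => (G.src e = v ∨ G.tgt e = v) ∧ pairDot m (G.dir e) = 0)) ⊆ A' ∪ B' := by
      intro e he
      rw [Finset.mem_filter] at he
      rcases he.2.1 with h | h
      · exact Finset.mem_union_left _ (by simp [hA', hA, h, he.2.2])
      · exact Finset.mem_union_right _ (by simp [hB', hB, h, he.2.2])
    have hCeq : (Finset.univ.filter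
        (fun u => G.att u = v ∧ pairDot m (G.udir u) = 0)) = C' := by
      ext u; simp [hC', hC, and_assoc]
    calc (Finset.univ.filter
          (fun e => (G.src e = v ∨ G.tgt e = v) ∧ pairDot m (G.dir e) = 0)).card +
        (Finset.univ.filter
          (fun u => G.att u = v ∧ pairDot m (G.udir u) = 0)).card
        ≤ (A' ∪ B').card + C'.card := by
          rw [hCeq]
          exact Nat.add_le_add_right (Finset.card_le_card hsub) _
      _ ≤ A'.card + B'.card + C'.card := by
          exact Nat.add_le_add_right (Finset.card_union_le _ _) _
      _ ≤ 1 := hcards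
  · intro e hev hm
    have heA : e ∈ A := by simp [hA, hev]
    have hge := hAone e heA hm
    have hle : φ.val (G.tgt e) - φ.val (G.src e) ≤
        ∑ e ∈ A, (φ.val (G.tgt e) - φ.val (G.src e)) :=
      Finset.single_le_sum hApos heA
    linarith
  · intro e hev hm
    have heB : e ∈ B := by simp [hB, hev]
    have hge := hBone e heB hm
    have hle : φ.val (G.src e) - φ.val (G.tgt e) ≤
        ∑ e ∈ B, (φ.val (G.src e) - φ.val (G.tgt e)) :=
      Finset.single_le_sum hBpos heB
    linarith
  · intro u huv hm
    have huC : u ∈ C := by simp [hC, huv]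
    have hge := hCone u huC hm
    have hle : (φ.uslope u : ℝ) ≤ ∑ u ∈ C, (φ.uslope u : ℝ) :=
      Finset.single_le_sum hCpos huC
    have : (φ.uslope u : ℝ) = 1 := by linarith
    exact_mod_cast this
end

section
/- (Pruning lemma, Laplacian part.) Let φ be a piecewise-linear function with integer slopes on Σ satisfying Δ(φ) + K_Σ ≥ 0. Let v be a vertex of Σ and let T ⊆ Σ be a subtree containing v such that v is the only vertex of T incident to edges of Σ not in T, and such that exactly one edge e of T is adjacent to v. Let Σ' = Σ∖(T∖{v}) be the graph obtained from Σ by deleting all edges of T and all vertices of T other than v. If s_φ(v,e) > 0, then the restriction φ|_{Σ'} satisfies Δ(φ|_{Σ'}) + K_{Σ'} ≥ 0, where K_{Σ'} is the canonical divisor of Σ'. -/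
attribute [local instance] Classical.propDecidable

open TropGraph in
/-- Pruning lemma, Laplacian part: let `φ` be a piecewise-linear function
with integer slopes on `Σ` satisfying `Δ(φ) + K_Σ ≥ 0`.  Let `T ⊆ Σ` be a subtree
(connected with `#edges + 1 = #vertices`, possibly together with some unbounded edges)
containing a vertex `v`, such that `v` is the only vertex of `T` incident to edges of
`Σ` not in `T` and exactly one edge `e` of `T` is adjacent to `v`.  If `s_φ(v,e) > 0`,
then on the graph `Σ' = Σ∖(T∖{v})` (delete all edges of `T` and all vertices of `T`
other than `v`) the restriction `φ|_{Σ'}` satisfies `Δ(φ|_{Σ'}) + K_{Σ'} ≥ 0`. -/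
theorem pruning_laplacian
    {n : ℕ} (G : TropGraph n) (φ : TropGraph.PL G)
    (hK : φ.CanonicalBound)
    (VT : Finset G.V) (ET : Finset G.BE) (UT : Finset G.UE) (v : G.V) (e : G.BE)
    -- T is a subgraph of Σ
    (hTsub : ∀ e' ∈ ET, G.src e' ∈ VT ∧ G.tgt e' ∈ VT)
    (hUsub : ∀ u ∈ UT, G.att u ∈ VT)
    (hvT : v ∈ VT)
    -- T is a tree: connected and acyclic
    (hTconn : ∀ w ∈ VT, Relation.ReflTransGen
      (fun a b => ∃ e' ∈ ET, (G.src e' = a ∧ G.tgt e' = b) ∨ (G.src e' = b ∧ G.tgt e' = a))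
      v w)
    (hTacyc : ET.card + 1 = VT.card)
    -- v is the only vertex of T incident to edges of Σ not in T
    (hiso : ∀ w ∈ VT, w ≠ v →
      (∀ e' : G.BE, (G.src e' = w ∨ G.tgt e' = w) → e' ∈ ET) ∧
      ∀ u : G.UE, G.att u = w → u ∈ UT)
    -- e is the unique edge of T adjacent to v
    (heT : e ∈ ET) (hev : G.src e = v ∨ G.tgt e = v)
    (heuniq : ∀ e' ∈ ET, (G.src e' = v ∨ G.tgt e' = v) → e' = e)
    (huuniq : ∀ u ∈ UT, G.att u ≠ v)
    -- the slope of φ at v along e is positive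
    (hpos : (G.src e = v ∧ 0 < φ.val (G.tgt e) - φ.val (G.src e)) ∨
      (G.tgt e = v ∧ 0 < φ.val (G.src e) - φ.val (G.tgt e))) :
    -- conclusion: Δ(φ|_{Σ'}) + K_{Σ'} ≥ 0 at every vertex of Σ'
    ∀ w : G.V, w ∉ VT ∨ w = v →
      (∑ e' ∈ Finset.univ.filter (fun e' => G.src e' = w ∧ e' ∉ ET),
          (φ.val (G.tgt e') - φ.val (G.src e'))) +
        (∑ e' ∈ Finset.univ.filter (fun e' => G.tgt e' = w ∧ e' ∉ ET),
          (φ.val (G.src e') - φ.val (G.tgt e'))) +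
        (∑ u ∈ Finset.univ.filter (fun u => G.att u = w ∧ u ∉ UT), (φ.uslope u : ℝ))
      ≤ (((Finset.univ.filter (fun e' => G.src e' = w ∧ e' ∉ ET)).card +
          (Finset.univ.filter (fun e' => G.tgt e' = w ∧ e' ∉ ET)).card +
          (Finset.univ.filter (fun u => G.att u = w ∧ u ∉ UT)).card : ℕ) : ℝ) - 2 := by
  intro w hw
  rcases hw with hw | hw
  · -- w ∉ VT : the filters are unchanged
    have h1 : Finset.univ.filter (fun e' => G.src e' = w ∧ e' ∉ ET)
        = Finset.univ.filter (fun e' => G.src e' = w) := by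
      ext e'
      simp only [Finset.mem_filter, Finset.mem_univ, true_and]
      exact ⟨fun h => h.1, fun h => ⟨h, fun hET => hw (h ▸ (hTsub e' hET).1)⟩⟩
    have h2 : Finset.univ.filter (fun e' => G.tgt e' = w ∧ e' ∉ ET)
        = Finset.univ.filter (fun e' => G.tgt e' = w) := by
      ext e'
      simp only [Finset.mem_filter, Finset.mem_univ, true_and]
      exact ⟨fun h => h.1, fun h => ⟨h, fun hET => hw (h ▸ (hTsub e' hET).2)⟩⟩
    have h3 : Finset.univ.filter (fun u => G.att u = w ∧ u ∉ UT)
        = Finset.univ.filter (fun u => G.att u = w) := by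
      ext u
      simp only [Finset.mem_filter, Finset.mem_univ, true_and]
      exact ⟨fun h => h.1, fun h => ⟨h, fun hUT => hw (h ▸ hUsub u hUT)⟩⟩
    have := hK w
    rw [h1, h2, h3]
    simpa [TropGraph.PL.slopeSum, TropGraph.degree] using this
  · -- w = v
    replace hw := hw.symm; subst hw
    -- all slopes/filters at v differ only by the edge e
    rcases hev with hsrc | htgt
    · have htne : G.tgt e ≠ v := fun h => G.src_ne_tgt e (hsrc.trans h.symm)
      have hpos' : 0 < φ.val (G.tgt e) - φ.val (G.src e) := by
        rcases hpos with ⟨_, h⟩ | ⟨h, _⟩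
        · exact h
        · exact absurd h htne
      have h1 : Finset.univ.filter (fun e' => G.src e' = v)
          = insert e (Finset.univ.filter (fun e' => G.src e' = v ∧ e' ∉ ET)) := by
        ext e'
        simp only [Finset.mem_insert, Finset.mem_filter, Finset.mem_univ, true_and]
        constructor
        · intro h
          by_cases hET : e' ∈ ET
          · exact Or.inl (heuniq e' hET (Or.inl h))
          · exact Or.inr ⟨h, hET⟩
        · rintro (rfl | h)
          · exact hsrc
          · exact h.1
      have hnot : e ∉ Finset.univ.filter (fun e' => G.src e' = v ∧ e' ∉ ET) := by
        simp [heT]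
      have h2 : Finset.univ.filter (fun e' => G.tgt e' = v ∧ e' ∉ ET)
          = Finset.univ.filter (fun e' => G.tgt e' = v) := by
        ext e'
        simp only [Finset.mem_filter, Finset.mem_univ, true_and]
        refine ⟨fun h => h.1, fun h => ⟨h, fun hET => ?_⟩⟩
        exact htne ((heuniq e' hET (Or.inr h)) ▸ h)
      have h3 : Finset.univ.filter (fun u => G.att u = v ∧ u ∉ UT)
          = Finset.univ.filter (fun u => G.att u = v) := by
        ext u
        simp only [Finset.mem_filter, Finset.mem_univ, true_and]
        exact ⟨fun h => h.1, fun h => ⟨h, fun hUT => huuniq u hUT h⟩⟩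
      -- the slope along e is an integer ≥ 1
      obtain ⟨k, hk⟩ := φ.int_slope e
      have hk1 : (1 : ℝ) ≤ φ.val (G.tgt e) - φ.val (G.src e) := by
        rw [hk] at hpos' ⊢
        exact_mod_cast (by exact_mod_cast hpos' : (0 : ℤ) < k)
      have hKv := hK v
      rw [TropGraph.PL.slopeSum, h1, Finset.sum_insert hnot] at hKv
      rw [TropGraph.degree, h1, Finset.card_insert_of_notMem hnot] at hKv
      rw [h2, h3]
      push_cast at hKv ⊢
      linarith
    · have hsne : G.src e ≠ v := fun h => G.src_ne_tgt e (h.trans htgt.symm)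
      have hpos' : 0 < φ.val (G.src e) - φ.val (G.tgt e) := by
        rcases hpos with ⟨h, _⟩ | ⟨_, h⟩
        · exact absurd h hsne
        · exact h
      have h1 : Finset.univ.filter (fun e' => G.tgt e' = v)
          = insert e (Finset.univ.filter (fun e' => G.tgt e' = v ∧ e' ∉ ET)) := by
        ext e'
        simp only [Finset.mem_insert, Finset.mem_filter, Finset.mem_univ, true_and]
        constructor
        · intro h
          by_cases hET : e' ∈ ET
          · exact Or.inl (heuniq e' hET (Or.inr h))
          · exact Or.inr ⟨h, hET⟩
        · rintro (rfl | h)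
          · exact htgt
          · exact h.1
      have hnot : e ∉ Finset.univ.filter (fun e' => G.tgt e' = v ∧ e' ∉ ET) := by
        simp [heT]
      have h2 : Finset.univ.filter (fun e' => G.src e' = v ∧ e' ∉ ET)
          = Finset.univ.filter (fun e' => G.src e' = v) := by
        ext e'
        simp only [Finset.mem_filter, Finset.mem_univ, true_and]
        refine ⟨fun h => h.1, fun h => ⟨h, fun hET => ?_⟩⟩
        exact hsne ((heuniq e' hET (Or.inl h)) ▸ h)
      have h3 : Finset.univ.filter (fun u => G.att u = v ∧ u ∉ UT)
          = Finset.univ.filter (fun u => G.att u = v) := by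
        ext u
        simp only [Finset.mem_filter, Finset.mem_univ, true_and]
        exact ⟨fun h => h.1, fun h => ⟨h, fun hUT => huuniq u hUT h⟩⟩
      obtain ⟨k, hk⟩ := φ.int_slope e
      have hk1 : (1 : ℝ) ≤ φ.val (G.src e) - φ.val (G.tgt e) := by
        have : φ.val (G.src e) - φ.val (G.tgt e) = ((-k : ℤ) : ℝ) := by
          push_cast; linarith [hk]
        rw [this] at hpos' ⊢
        exact_mod_cast (by exact_mod_cast hpos' : (0 : ℤ) < -k)
      have hKv := hK v
      rw [TropGraph.PL.slopeSum, h1, Finset.sum_insert hnot] at hKv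
      rw [TropGraph.degree, h1, Finset.card_insert_of_notMem hnot] at hKv
      rw [h2, h3]
      push_cast at hKv ⊢
      linarith
end

section
/- (Combinatorial core of the weak well-spacedness theorem.) Let Σ be a finite connected graph as in the context, and let Γ' ⊆ Σ be a subgraph containing at least one cycle (h¹(Γ') > 0) such that: the boundary ∂Γ' (vertices of Γ' incident to an edge of Σ not in Γ') consists of a single vertex v₀ of degree 3 in Σ; exactly one edge e₀ of v₀ lies in Γ'; and every edge of Σ incident to a vertex of Γ'∖{v₀} lies in Γ'. Let φ be a nonnegative piecewise-linear function with integer slopes on Σ such that Δ(φ) + K_Σ ≥ 0, φ vanishes identically on every edge of Σ not in Γ', and the slope of φ is nonzero on every edge of Γ'. Let Γ be a cycle in Γ' for which h_Γ = min_{v' ∈ V(Γ)} φ(v') is minimal among all cycles contained in Γ'. Then deg(D_φ) ≤ 1, where deg(D_φ) is the degree of the divisor of φ on Γ in Γ'. -/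
attribute [local instance] Classical.propDecidable

/-- A walk of length `k` from `a` to `b` along the relation `adj`. -/
inductive WalkN {α : Type*} (adj : α → α → Prop) : α → α → ℕ → Prop
  | refl (a : α) : WalkN adj a a 0
  | tail {a b c : α} {k : ℕ} : WalkN adj a b k → adj b c → WalkN adj a c (k + 1)

/-- Mutual reachability is an equivalence relation. -/
def connSetoid {α : Type*} (adj : α → α → Prop) : Setoid α where
  r a b := Relation.ReflTransGen adj a b ∧ Relation.ReflTransGen adj b a
  iseqv := ⟨fun _ => ⟨.refl, .refl⟩, fun h => ⟨h.2, h.1⟩,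
    fun h1 h2 => ⟨h1.1.trans h2.1, h2.2.trans h1.2⟩⟩

/-- The number of connected components of the graph with adjacency relation `adj`. -/
noncomputable def compCount {α : Type*} (adj : α → α → Prop) : ℕ :=
  Nat.card (Quotient (connSetoid adj))




namespace WSAux
open Finset

variable {n : ℕ} {G : TropGraph n}

def Adj (G : TropGraph n) (E : Finset G.BE) (a b : G.V) : Prop :=
  ∃ e ∈ E, (G.src e = a ∧ G.tgt e = b) ∨ (G.src e = b ∧ G.tgt e = a)

lemma adj_symm {E : Finset G.BE} {a b : G.V} (h : Adj G E a b) : Adj G E b a := by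
  obtain ⟨e, he, h⟩ := h; exact ⟨e, he, h.symm⟩

lemma adj_mono {E E' : Finset G.BE} (hEE : E ⊆ E') {a b : G.V} (h : Adj G E a b) :
    Adj G E' a b := by obtain ⟨e, he, h⟩ := h; exact ⟨e, hEE he, h⟩

lemma adj_ne {E : Finset G.BE} {a b : G.V} (h : Adj G E a b) : a ≠ b := by
  obtain ⟨e, _, h | h⟩ := h <;> rintro rfl <;>
    exact G.src_ne_tgt e (h.1.trans h.2.symm)

lemma rtg_symm {E : Finset G.BE} {a b : G.V}
    (h : Relation.ReflTransGen (Adj G E) a b) : Relation.ReflTransGen (Adj G E) b a := by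
  induction h with
  | refl => exact .refl
  | tail _ h ih => exact Relation.ReflTransGen.trans (.single (adj_symm h)) ih

lemma rtg_mono {E E' : Finset G.BE} (hEE : E ⊆ E') {a b : G.V}
    (h : Relation.ReflTransGen (Adj G E) a b) : Relation.ReflTransGen (Adj G E') a b :=
  Relation.ReflTransGen.mono (fun _ _ => adj_mono hEE) _ _ h

def IsCycle (G : TropGraph n) (P₂ : Finset G.V) (E₂ : Finset G.BE) : Prop :=
  P₂.Nonempty ∧ (∀ e ∈ E₂, G.src e ∈ P₂ ∧ G.tgt e ∈ P₂) ∧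
    (∀ a ∈ P₂, ∀ b ∈ P₂, Relation.ReflTransGen
      (fun a b => ∃ e ∈ E₂, (G.src e = a ∧ G.tgt e = b) ∨ (G.src e = b ∧ G.tgt e = a)) a b) ∧
    (∀ w ∈ P₂, (E₂.filter (fun e => G.src e = w)).card +
      (E₂.filter (fun e => G.tgt e = w)).card = 2)

noncomputable def inc (E : Finset G.BE) (w : G.V) : ℕ :=
  (E.filter (fun e => G.src e = w)).card + (E.filter (fun e => G.tgt e = w)).card

lemma inc_insert (E : Finset G.BE) (e : G.BE) (he : e ∉ E) (w : G.V) :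
    inc (insert e E) w =
      inc E w + ((if G.src e = w then 1 else 0) + (if G.tgt e = w then 1 else 0)) := by
  unfold inc
  rw [Finset.filter_insert, Finset.filter_insert]
  have hs : e ∉ E.filter (fun e' => G.src e' = w) := fun p => he (Finset.mem_filter.mp p).1
  have ht : e ∉ E.filter (fun e' => G.tgt e' = w) := fun p => he (Finset.mem_filter.mp p).1
  by_cases h1 : G.src e = w <;> by_cases h2 : G.tgt e = w <;>
    simp [h1, h2, Finset.card_insert_of_notMem, hs, ht] <;> omega

lemma path_edges : ∀ (l : List G.V) (a : G.V) (E : Finset G.BE),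
    l ≠ [] → List.Chain (Adj G E) a l → (a :: l).Nodup →
    ∃ E₂ : Finset G.BE, E₂ ⊆ E ∧
      (∀ e ∈ E₂, G.src e ∈ (a :: l).toFinset ∧ G.tgt e ∈ (a :: l).toFinset) ∧
      (∀ x ∈ (a :: l).toFinset, Relation.ReflTransGen (Adj G E₂) a x) ∧
      (∀ w, inc E₂ w = if w = a ∨ w = (a :: l).getLast (by simp) then 1
        else if w ∈ (a :: l).toFinset then 2 else 0) := by
  intro l
  induction l with
  | nil => intro a E h; exact absurd rfl h
  | cons x l' ih =>
    intro a E _ hchain hnodup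
    rcases List.chain_cons.mp hchain with ⟨hax, hchain'⟩
    obtain ⟨e₁, he₁E, he₁⟩ := hax
    have hax_ne : a ≠ x := by
      have := hnodup; simp at this; tauto
    by_cases hl' : l' = []
    · subst hl'
      have hgl : (a :: [x]).getLast (by simp) = x := rfl
      refine ⟨{e₁}, by simp [he₁E], ?_, ?_, ?_⟩
      · intro e he; simp only [Finset.mem_singleton] at he; subst he
        rcases he₁ with ⟨h1, h2⟩ | ⟨h1, h2⟩ <;> simp [h1, h2]
      · intro y hy; simp at hy
        rcases hy with rfl | rfl
        · exact .refl
        · exact .single ⟨e₁, by simp, he₁⟩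
      · intro w
        have hone : inc ({e₁} : Finset G.BE) w =
            (if G.src e₁ = w then 1 else 0) + (if G.tgt e₁ = w then 1 else 0) := by
          unfold inc; rw [Finset.filter_singleton, Finset.filter_singleton]
          by_cases h1 : G.src e₁ = w <;> by_cases h2 : G.tgt e₁ = w <;> simp [h1, h2]
        rw [hone, hgl]
        rcases he₁ with ⟨h1, h2⟩ | ⟨h1, h2⟩ <;>
          rw [h1, h2] <;>
          split_ifs <;> subst_vars <;> simp_all <;>
            first
              | omega
              | (rename_i hor; rcases hor with rfl | rfl <;> simp_all)
    · have hnodup' : (x :: l').Nodup := (List.nodup_cons.mp hnodup).2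
      have haNotMem : a ∉ (x :: l').toFinset := by
        have := (List.nodup_cons.mp hnodup).1; simpa using this
      obtain ⟨E₂, hsub, hends, hreach, hinc⟩ := ih x E hl' hchain' hnodup'
      have he₁notE₂ : e₁ ∉ E₂ := by
        intro hmem
        rcases he₁ with ⟨h1, _⟩ | ⟨_, h2⟩
        · exact haNotMem (h1 ▸ (hends e₁ hmem).1)
        · exact haNotMem (h2 ▸ (hends e₁ hmem).2)
      refine ⟨insert e₁ E₂, Finset.insert_subset he₁E hsub, ?_, ?_, ?_⟩
      · intro e he
        rcases Finset.mem_insert.mp he with rfl | he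
        · rcases he₁ with ⟨h1, h2⟩ | ⟨h1, h2⟩ <;> simp [h1, h2]
        · have := hends e he; simp at this ⊢; tauto
      · intro y hy
        simp at hy
        rcases hy with rfl | hy
        · exact .refl
        · have h1 : Relation.ReflTransGen (Adj G (insert e₁ E₂)) a x :=
            .single ⟨e₁, Finset.mem_insert_self _ _, he₁⟩
          exact h1.trans (rtg_mono (Finset.subset_insert _ _) (hreach y (by simp [hy])))
      · intro w
        rw [inc_insert _ _ he₁notE₂, hinc w]
        have hb : (a :: x :: l').getLast (by simp) = (x :: l').getLast (by simp) :=
          List.getLast_cons (by simp)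
        rw [hb]
        set b := (x :: l').getLast (by simp) with hbdef
        have hbmem : b ∈ l' := by
          have h2 : b = l'.getLast hl' := List.getLast_cons hl'
          rw [h2]; exact List.getLast_mem hl'
        have hba : b ≠ a := by
          intro h; apply haNotMem; rw [← h]; simp [hbmem]
        have hbx : b ≠ x := by
          intro h; have := (List.nodup_cons.mp hnodup').1; rw [← h] at this; exact this hbmem
        have hxl : x ∉ l' := (List.nodup_cons.mp hnodup').1
        have flip : ∀ p : G.V, ((if p = w then 1 else 0) : ℕ) = if w = p then 1 else 0 := by
          intro p; by_cases h : p = w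
          · simp [h]
          · rw [if_neg h, if_neg (fun hh : w = p => h hh.symm)]
        have hind : ((if G.src e₁ = w then 1 else 0) + (if G.tgt e₁ = w then 1 else 0) : ℕ)
            = (if w = a then 1 else 0) + (if w = x then 1 else 0) := by
          rcases he₁ with ⟨h1, h2⟩ | ⟨h1, h2⟩ <;> rw [h1, h2, flip, flip] <;>
            exact Nat.add_comm _ _
        have haxl : a ∉ l' := fun h => haNotMem (by simp [h])
        rw [hind]
        by_cases hwa : w = a
        · subst hwa
          simp [hax_ne, Ne.symm hba, haNotMem, haxl]
        · by_cases hwx : w = x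
          · subst hwx
            simp [Ne.symm hax_ne, Ne.symm hbx, hwa]
          · by_cases hwb : w = b
            · subst hwb
              simp [hba, hbx, hwa]
            · by_cases hwl : w ∈ l'
              · simp [hwa, hwx, hwb, hwl]
              · simp [hwa, hwx, hwb, hwl]


def SG (G : TropGraph n) (E : Finset G.BE) : SimpleGraph G.V where
  Adj := Adj G E
  symm := ⟨fun _ _ => adj_symm⟩
  loopless := ⟨fun _ h => adj_ne h rfl⟩

lemma nodup_chain_of_rtg {E : Finset G.BE} {a b : G.V}
    (h : Relation.ReflTransGen (Adj G E) a b) :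
    ∃ l : List G.V, List.Chain (Adj G E) a l ∧ (a :: l).getLast (by simp) = b ∧
      (a :: l).Nodup := by
  classical
  have hreach : (SG G E).Reachable a b := (SimpleGraph.reachable_iff_reflTransGen a b).mpr h
  obtain ⟨p⟩ := hreach
  let q : (SG G E).Walk a b := (p.toPath : (SG G E).Path a b)
  have hsupp : q.support = a :: q.support.tail := q.support_eq_cons
  refine ⟨q.support.tail, ?_, ?_, ?_⟩
  · have hc : List.Chain' (SG G E).Adj q.support := q.isChain_adj_support
    rw [hsupp] at hc
    exact hc
  · have key : ∀ (L : List G.V) (hL : L ≠ []) (_ : q.support = L), L.getLast hL = b := by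
      intro L hL hEq
      subst hEq
      exact q.getLast_support
    exact key _ (by simp) hsupp
  · have := p.toPath.isPath.support_nodup
    rw [show (p.toPath : (SG G E).Walk a b).support = q.support from rfl, hsupp] at this
    exact this

lemma cycle_of_reconnect {f : G.BE} {E : Finset G.BE} {a b : G.V}
    (hab : (G.src f = a ∧ G.tgt f = b) ∨ (G.src f = b ∧ G.tgt f = a))
    (hf : f ∉ E) (hreach : Relation.ReflTransGen (Adj G E) a b) :
    ∃ P₂ E₂, IsCycle G P₂ E₂ ∧ E₂ ⊆ insert f E ∧ a ∈ P₂ := by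
  have hne : a ≠ b := by
    rcases hab with ⟨h1, h2⟩ | ⟨h1, h2⟩ <;> rintro rfl <;>
      exact G.src_ne_tgt f (h1.trans h2.symm)
  obtain ⟨l, hchain, hlast, hnodup⟩ := nodup_chain_of_rtg hreach
  have hl : l ≠ [] := by rintro rfl; simp at hlast; exact hne hlast
  obtain ⟨E₂, hsub, hends, hreach2, hinc⟩ := path_edges l a E hl hchain hnodup
  have hfE₂ : f ∉ E₂ := fun h => hf (hsub h)
  have hbmem : b ∈ (a :: l).toFinset := by
    rw [← hlast]; exact List.mem_toFinset.mpr (List.getLast_mem (by simp))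
  have hamem : a ∈ (a :: l).toFinset := by simp
  refine ⟨(a :: l).toFinset, insert f E₂, ⟨⟨a, hamem⟩, ?_, ?_, ?_⟩, ?_, hamem⟩
  · intro e he
    rcases Finset.mem_insert.mp he with rfl | he
    · rcases hab with ⟨h1, h2⟩ | ⟨h1, h2⟩ <;> rw [h1, h2] <;> exact ⟨by assumption, by assumption⟩
    · exact hends e he
  · intro x hx y hy
    have hax : Relation.ReflTransGen (Adj G (insert f E₂)) a x :=
      rtg_mono (Finset.subset_insert _ _) (hreach2 x hx)
    have hay : Relation.ReflTransGen (Adj G (insert f E₂)) a y :=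
      rtg_mono (Finset.subset_insert _ _) (hreach2 y hy)
    exact Relation.ReflTransGen.trans (rtg_symm hax) hay
  · intro w hw
    show inc (insert f E₂) w = 2
    rw [inc_insert _ _ hfE₂, hinc w, hlast]
    have hindf : ((if G.src f = w then 1 else 0) + (if G.tgt f = w then 1 else 0) : ℕ)
        = (if w = a then 1 else 0) + (if w = b then 1 else 0) := by
      have flip : ∀ p : G.V, ((if p = w then 1 else 0) : ℕ) = if w = p then 1 else 0 := by
        intro p; by_cases h : p = w
        · simp [h]
        · rw [if_neg h, if_neg (fun hh : w = p => h hh.symm)]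
      rcases hab with ⟨h1, h2⟩ | ⟨h1, h2⟩ <;> rw [h1, h2, flip, flip] <;>
        exact Nat.add_comm _ _
    rw [hindf]
    by_cases hwa : w = a
    · simp [hwa, hne, Ne.symm hne]
    · by_cases hwb : w = b
      · simp [hwa, hwb, Ne.symm hne]
      · have hwl : w ∈ l := by
          have h3 := List.mem_toFinset.mp hw
          simp at h3
          tauto
        simp [hwa, hwb, hwl]
  · exact Finset.insert_subset_insert f hsub

lemma rtg_restrict {E : Finset G.BE} {p : G.V} :
    ∀ {v : G.V}, Relation.ReflTransGen (Adj G E) p v →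
    Relation.ReflTransGen
      (Adj G (E.filter (fun e => Relation.ReflTransGen (Adj G E) p (G.src e)))) p v := by
  intro v h
  induction h with
  | refl => exact .refl
  | @tail b c hpb hbc ih =>
      obtain ⟨e, heE, hor⟩ := hbc
      have hsrc : Relation.ReflTransGen (Adj G E) p (G.src e) := by
        rcases hor with ⟨h1, h2⟩ | ⟨h1, h2⟩
        · rw [h1]; exact hpb
        · rw [h1]; exact hpb.tail ⟨e, heE, Or.inr ⟨h1, h2⟩⟩
      exact ih.tail ⟨e, Finset.mem_filter.mpr ⟨heE, hsrc⟩, hor⟩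

lemma tree_bound : ∀ (N : ℕ) (EE : Finset G.BE) (C : Finset G.V) (a : G.V),
    EE.card ≤ N → a ∈ C →
    (∀ v ∈ C, Relation.ReflTransGen (Adj G EE) a v) →
    (∀ e ∈ EE, G.src e ∈ C ∧ G.tgt e ∈ C) →
    (∀ P₂ E₂, IsCycle G P₂ E₂ → ¬ E₂ ⊆ EE) →
    EE.card + 1 ≤ C.card := by
  intro N
  induction N with
  | zero =>
    intro EE C a hcard haC _ _ _
    have hEE : EE.card = 0 := Nat.le_zero.mp hcard
    rw [hEE]
    exact Finset.card_pos.mpr ⟨a, haC⟩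
  | succ N ih =>
    intro EE C a hcard haC hconn hends hnocyc
    rcases Finset.eq_empty_or_nonempty EE with rfl | ⟨e, he⟩
    · simpa using Finset.card_pos.mpr ⟨a, haC⟩
    set EE' := EE.erase e with hEE'def
    have heEE' : e ∉ EE' := Finset.notMem_erase e EE
    have hsubEE' : EE' ⊆ EE := Finset.erase_subset e EE
    have hpq : G.src e ≠ G.tgt e := G.src_ne_tgt e
    by_cases hreach : Relation.ReflTransGen (Adj G EE') (G.src e) (G.tgt e)
    · exfalso
      obtain ⟨P₂, E₂, hcyc2, hsub2, _⟩ :=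
        cycle_of_reconnect (Or.inl ⟨rfl, rfl⟩) heEE' hreach
      exact hnocyc P₂ E₂ hcyc2 (hsub2.trans (by rw [Finset.insert_erase he]))
    · -- notation
      set Rp : G.V → Prop := fun v => Relation.ReflTransGen (Adj G EE') (G.src e) v with hRp
      set Rq : G.V → Prop := fun v => Relation.ReflTransGen (Adj G EE') (G.tgt e) v with hRq
      have claim : ∀ y, Relation.ReflTransGen (Adj G EE) (G.src e) y → Rp y ∨ Rq y := by
        intro y hy
        induction hy with
        | refl => exact Or.inl .refl
        | @tail x y _ hadj ih2 =>
          obtain ⟨e', he'E, hor⟩ := hadj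
          by_cases hee : e' = e
          · subst hee
            rcases hor with ⟨h1, h2⟩ | ⟨h1, h2⟩
            · subst h2; exact Or.inr .refl
            · subst h1; exact Or.inl .refl
          · have he'EE' : e' ∈ EE' := Finset.mem_erase.mpr ⟨hee, he'E⟩
            rcases ih2 with h | h
            · exact Or.inl (h.tail ⟨e', he'EE', hor⟩)
            · exact Or.inr (h.tail ⟨e', he'EE', hor⟩)
      have hpC : G.src e ∈ C := (hends e he).1
      have hqC : G.tgt e ∈ C := (hends e he).2
      have claimC : ∀ v ∈ C, Rp v ∨ Rq v := by
        intro v hv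
        exact claim v ((rtg_symm (hconn _ hpC)).trans (hconn v hv))
      set C₁ := C.filter Rp with hC₁
      set C₂ := C.filter (fun v => ¬ Rp v) with hC₂
      set EE₁ := EE'.filter (fun e' => Rp (G.src e')) with hEE₁
      set EE₂ := EE'.filter (fun e' => ¬ Rp (G.src e')) with hEE₂
      have hRpq : ∀ v, Rq v → ¬ Rp v := by
        intro v hq hp
        exact hreach (hp.trans (rtg_symm hq))
      have h1 : EE₁.card + 1 ≤ C₁.card := by
        refine ih EE₁ C₁ (G.src e) ?_ ?_ ?_ ?_ ?_
        · have : EE₁.card ≤ EE'.card := Finset.card_le_card (Finset.filter_subset _ _)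
          have h2 : EE'.card + 1 = EE.card := Finset.card_erase_add_one he
          omega
        · exact Finset.mem_filter.mpr ⟨hpC, .refl⟩
        · intro v hv
          have hRpv : Rp v := (Finset.mem_filter.mp hv).2
          exact rtg_restrict hRpv
        · intro e' he'
          obtain ⟨he'EE', hRpsrc⟩ := Finset.mem_filter.mp he'
          refine ⟨Finset.mem_filter.mpr ⟨(hends e' (hsubEE' he'EE')).1, hRpsrc⟩,
            Finset.mem_filter.mpr ⟨(hends e' (hsubEE' he'EE')).2, ?_⟩⟩
          exact hRpsrc.tail ⟨e', he'EE', Or.inl ⟨rfl, rfl⟩⟩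
        · intro P₂ E₂ hc hsub2
          exact hnocyc P₂ E₂ hc (hsub2.trans ((Finset.filter_subset _ _).trans hsubEE'))
      have h2 : EE₂.card + 1 ≤ C₂.card := by
        refine ih EE₂ C₂ (G.tgt e) ?_ ?_ ?_ ?_ ?_
        · have : EE₂.card ≤ EE'.card := Finset.card_le_card (Finset.filter_subset _ _)
          have h2 : EE'.card + 1 = EE.card := Finset.card_erase_add_one he
          omega
        · exact Finset.mem_filter.mpr ⟨hqC, hreach⟩
        · intro v hv
          obtain ⟨hvC, hnRp⟩ := Finset.mem_filter.mp hv
          have hRqv : Rq v := (claimC v hvC).resolve_left hnRp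
          have := rtg_restrict hRqv
          refine rtg_mono ?_ this
          intro e' he'
          obtain ⟨he'EE', hq⟩ := Finset.mem_filter.mp he'
          exact Finset.mem_filter.mpr ⟨he'EE', hRpq _ hq⟩
        · intro e' he'
          obtain ⟨he'EE', hnRpsrc⟩ := Finset.mem_filter.mp he'
          have hsrcC := (hends e' (hsubEE' he'EE')).1
          have htgtC := (hends e' (hsubEE' he'EE')).2
          refine ⟨Finset.mem_filter.mpr ⟨hsrcC, hnRpsrc⟩,
            Finset.mem_filter.mpr ⟨htgtC, ?_⟩⟩
          intro hRptgt
          exact hnRpsrc (hRptgt.tail ⟨e', he'EE', Or.inr ⟨rfl, rfl⟩⟩)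
        · intro P₂ E₂ hc hsub2
          exact hnocyc P₂ E₂ hc (hsub2.trans ((Finset.filter_subset _ _).trans hsubEE'))
      have hCsplit : C₁.card + C₂.card = C.card :=
        Finset.card_filter_add_card_filter_not _
      have hEsplit : EE₁.card + EE₂.card = EE'.card :=
        Finset.card_filter_add_card_filter_not _
      have hEcard : EE'.card + 1 = EE.card := Finset.card_erase_add_one he
      omega

lemma fib_sum {ι : Type} [Fintype ι] (C : Finset G.V) (key : ι → G.V) (g : ι → ℝ)
    (R : Finset ι) (hR : ∀ i, i ∈ R ↔ key i ∈ C) :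
    ∑ v ∈ C, ∑ i ∈ Finset.univ.filter (fun i => key i = v), g i = ∑ i ∈ R, g i := by
  have hRe : R = Finset.univ.filter (fun i => key i ∈ C) := by
    ext i; simp only [Finset.mem_filter, Finset.mem_univ, true_and]; exact hR i
  subst hRe
  rw [← Finset.sum_fiberwise_of_maps_to
    (t := C) (g := key) (fun i hi => (Finset.mem_filter.mp hi).2) g]
  refine Finset.sum_congr rfl fun v hv => Finset.sum_congr ?_ fun _ _ => rfl
  ext i
  simp only [Finset.mem_filter, Finset.mem_univ, true_and]
  constructor
  · intro h; exact ⟨h ▸ hv, h⟩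
  · intro h; exact h.2


lemma cycle_vertex_edge {P₂ : Finset G.V} {E₂ : Finset G.BE} (hc : IsCycle G P₂ E₂)
    {w : G.V} (hw : w ∈ P₂) : ∃ e ∈ E₂, G.src e = w ∨ G.tgt e = w := by
  have hdeg := hc.2.2.2 w hw
  by_contra hno
  push_neg at hno
  have h1 : E₂.filter (fun e => G.src e = w) = ∅ := by
    rw [Finset.filter_eq_empty_iff]
    intro e he hsrc
    exact (hno e he).1 hsrc
  have h2 : E₂.filter (fun e => G.tgt e = w) = ∅ := by
    rw [Finset.filter_eq_empty_iff]
    intro e he htgt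
    exact (hno e he).2 htgt
  rw [h1, h2] at hdeg
  simp at hdeg

lemma sum_keyed (E' : Finset G.BE) (A : Finset G.V) (p r : G.BE → Prop) (key : G.BE → G.V)
    (g : G.BE → ℝ) :
    ∑ w ∈ A, ∑ e ∈ E'.filter (fun e => p e ∧ key e = w ∧ r e), g e
      = ∑ e ∈ E'.filter (fun e => p e ∧ key e ∈ A ∧ r e), g e := by
  classical
  rw [← Finset.sum_fiberwise_of_maps_to
    (t := A) (g := key) (fun e he => ((Finset.mem_filter.mp he).2).2.1) g]
  refine Finset.sum_congr rfl fun w hw => Finset.sum_congr ?_ fun _ _ => rfl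
  ext e
  simp only [Finset.mem_filter]
  constructor
  · intro hmem
    have hkw : key e = w := by tauto
    subst hkw
    tauto
  · intro hmem
    have hkw : key e = w := by tauto
    subst hkw
    tauto

lemma sum_split {ι : Type} [Fintype ι] (p q : ι → Prop) (g : ι → ℝ) :
    ∑ i ∈ Finset.univ.filter p, g i
      = ∑ i ∈ Finset.univ.filter (fun i => p i ∧ q i), g i
        + ∑ i ∈ Finset.univ.filter (fun i => p i ∧ ¬ q i), g i := by
  classical
  rw [← Finset.sum_filter_add_sum_filter_not (Finset.univ.filter p) q g,
    Finset.filter_filter, Finset.filter_filter]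

lemma card_real {ι : Type} (s : Finset ι) : ((s.card : ℝ)) = ∑ _i ∈ s, (1 : ℝ) := by simp

end WSAux

set_option maxHeartbeats 1000000

open TropGraph in
/-- Combinatorial core of the weak well-spacedness theorem: let `Γ' ⊆ Σ`
be a subgraph containing a cycle (`h¹(Γ') > 0`, i.e. `#V(Γ') < #E(Γ') + #components`)
whose boundary `∂Γ'` consists of a single vertex `v₀` of degree 3 in `Σ`, with exactly
one edge `e₀` of `v₀` lying in `Γ'`, and such that every edge of `Σ` incident to a
vertex of `Γ'∖{v₀}` lies in `Γ'`.  Let `φ` be a nonnegative piecewise-linear function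
with integer slopes on `Σ` with `Δ(φ) + K_Σ ≥ 0`, vanishing identically on every edge
not in `Γ'` and with nonzero slope on every edge of `Γ'`.  If `Γ` is a cycle in `Γ'`
minimizing `h_Γ = min_{v' ∈ Γ} φ(v')`, then `deg(D_φ) ≤ 1`. -/
theorem weak_wellspacedness_degree_le_one
    {n : ℕ} (G : TropGraph n) (φ : TropGraph.PL G)
    (P' : Finset G.V) (E' : Finset G.BE) (U' : Finset G.UE)
    (v₀ : G.V) (e₀ : G.BE)
    (PΓ : Finset G.V) (EΓ : Finset G.BE) (hΓne : PΓ.Nonempty)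
    -- Γ' = (P', E', U') is a subgraph of Σ
    (hE' : ∀ e ∈ E', G.src e ∈ P' ∧ G.tgt e ∈ P')
    (hU' : ∀ u ∈ U', G.att u ∈ P')
    -- h¹(Γ') > 0: more (bounded) edges than vertices minus components
    (hcyc : P'.card < E'.card + compCount (fun a b : {w : G.V // w ∈ P'} =>
      ∃ e ∈ E', (G.src e = a.1 ∧ G.tgt e = b.1) ∨ (G.src e = b.1 ∧ G.tgt e = a.1)))
    -- ∂Γ' = {v₀} and v₀ is trivalent in Σ
    (hB' : ∀ w : G.V, (w ∈ P' ∧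
      ((∃ e : G.BE, e ∉ E' ∧ (G.src e = w ∨ G.tgt e = w)) ∨
        ∃ u : G.UE, u ∉ U' ∧ G.att u = w)) ↔ w = v₀)
    (hv₀deg : G.degree v₀ = 3)
    -- exactly one edge e₀ of v₀ lies in Γ'
    (he₀ : e₀ ∈ E') (he₀v : G.src e₀ = v₀ ∨ G.tgt e₀ = v₀)
    (he₀uniq : ∀ e ∈ E', (G.src e = v₀ ∨ G.tgt e = v₀) → e = e₀)
    (hnoU : ∀ u ∈ U', G.att u ≠ v₀)
    -- every edge of Σ incident to a vertex of Γ'∖{v₀} lies in Γ'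
    (hint : ∀ w ∈ P', w ≠ v₀ →
      (∀ e : G.BE, (G.src e = w ∨ G.tgt e = w) → e ∈ E') ∧
      ∀ u : G.UE, G.att u = w → u ∈ U')
    -- φ is nonnegative with Δ(φ) + K_Σ ≥ 0
    (hnn : φ.Nonneg) (hK : φ.CanonicalBound)
    -- φ vanishes identically on every edge of Σ not in Γ'
    (hvan1 : ∀ e : G.BE, e ∉ E' → φ.val (G.src e) = 0 ∧ φ.val (G.tgt e) = 0)
    (hvan2 : ∀ u : G.UE, u ∉ U' → φ.val (G.att u) = 0 ∧ φ.uslope u = 0)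
    -- the slope of φ is nonzero on every edge of Γ'
    (hnz1 : ∀ e ∈ E', φ.val (G.src e) ≠ φ.val (G.tgt e))
    (hnz2 : ∀ u ∈ U', φ.uslope u ≠ 0)
    -- Γ = (PΓ, EΓ) is a cycle contained in Γ'
    (hPΓ : ∀ w ∈ PΓ, w ∈ P') (hEΓsub : EΓ ⊆ E')
    (hEΓ : ∀ e ∈ EΓ, G.src e ∈ PΓ ∧ G.tgt e ∈ PΓ)
    (hΓconn : ∀ a ∈ PΓ, ∀ b ∈ PΓ, Relation.ReflTransGen
      (fun a b => ∃ e ∈ EΓ, (G.src e = a ∧ G.tgt e = b) ∨ (G.src e = b ∧ G.tgt e = a)) a b)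
    (hΓdeg2 : ∀ w ∈ PΓ,
      (EΓ.filter (fun e => G.src e = w)).card + (EΓ.filter (fun e => G.tgt e = w)).card = 2)
    -- Γ minimizes h_Γ = min_{v' ∈ Γ} φ(v') among all cycles contained in Γ'
    (hmin : ∀ (P₂ : Finset G.V) (E₂ : Finset G.BE) (hne₂ : P₂.Nonempty),
      (∀ w ∈ P₂, w ∈ P') → E₂ ⊆ E' → (∀ e ∈ E₂, G.src e ∈ P₂ ∧ G.tgt e ∈ P₂) →
      (∀ a ∈ P₂, ∀ b ∈ P₂, Relation.ReflTransGen
        (fun a b => ∃ e ∈ E₂, (G.src e = a ∧ G.tgt e = b) ∨ (G.src e = b ∧ G.tgt e = a)) a b) →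
      (∀ w ∈ P₂, (E₂.filter (fun e => G.src e = w)).card +
        (E₂.filter (fun e => G.tgt e = w)).card = 2) →
      PΓ.inf' hΓne φ.val ≤ P₂.inf' hne₂ φ.val) :
    -- conclusion: deg(D_φ) ≤ 1
    (∑ w ∈ PΓ.filter (fun w => φ.val w = PΓ.inf' hΓne φ.val),
      ((∑ e ∈ E'.filter (fun e => e ∉ EΓ ∧ G.src e = w ∧
          φ.val (G.tgt e) - φ.val (G.src e) < 0),
          (φ.val (G.src e) - φ.val (G.tgt e))) +
        (∑ e ∈ E'.filter (fun e => e ∉ EΓ ∧ G.tgt e = w ∧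
          φ.val (G.src e) - φ.val (G.tgt e) < 0),
          (φ.val (G.tgt e) - φ.val (G.src e))) +
        ∑ u ∈ U'.filter (fun u => G.att u = w ∧ φ.uslope u < 0), (-(φ.uslope u) : ℝ)))
      ≤ 1 := by
  classical
  set m0 := PΓ.inf' hΓne φ.val with hm0
  set S := PΓ.filter (fun w => φ.val w = m0) with hSdef
  have hUe : ∀ w : G.V, U'.filter (fun u => G.att u = w ∧ φ.uslope u < 0) = ∅ := by
    intro w
    rw [Finset.filter_eq_empty_iff]
    intro u _ hcond
    exact absurd hcond.2 (not_lt.mpr (hnn.2 u))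
  simp only [hUe, Finset.sum_empty, add_zero]
  rw [Finset.sum_add_distrib]
  set D₁ := E'.filter (fun e => e ∉ EΓ ∧ G.src e ∈ S ∧
    φ.val (G.tgt e) - φ.val (G.src e) < 0) with hD₁def
  set D₂ := E'.filter (fun e => e ∉ EΓ ∧ G.tgt e ∈ S ∧
    φ.val (G.src e) - φ.val (G.tgt e) < 0) with hD₂def
  have hkey1 : ∑ w ∈ S, ∑ e ∈ E'.filter (fun e => e ∉ EΓ ∧ G.src e = w ∧
      φ.val (G.tgt e) - φ.val (G.src e) < 0), (φ.val (G.src e) - φ.val (G.tgt e))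
      = ∑ e ∈ D₁, (φ.val (G.src e) - φ.val (G.tgt e)) := by
    conv_rhs => rw [← Finset.sum_fiberwise_of_maps_to (t := S) (g := G.src)
      (fun e he => ((Finset.mem_filter.mp he).2).2.1)
      (fun e => φ.val (G.src e) - φ.val (G.tgt e))]
    refine Finset.sum_congr rfl fun w hw => Finset.sum_congr ?_ fun _ _ => rfl
    ext e
    simp only [hD₁def, Finset.mem_filter]
    constructor
    · intro hmem
      have hkw : G.src e = w := by tauto
      subst hkw
      tauto
    · intro hmem
      have hkw : G.src e = w := by tauto
      subst hkw
      tauto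
  have hkey2 : ∑ w ∈ S, ∑ e ∈ E'.filter (fun e => e ∉ EΓ ∧ G.tgt e = w ∧
      φ.val (G.src e) - φ.val (G.tgt e) < 0), (φ.val (G.tgt e) - φ.val (G.src e))
      = ∑ e ∈ D₂, (φ.val (G.tgt e) - φ.val (G.src e)) := by
    conv_rhs => rw [← Finset.sum_fiberwise_of_maps_to (t := S) (g := G.tgt)
      (fun e he => ((Finset.mem_filter.mp he).2).2.1)
      (fun e => φ.val (G.tgt e) - φ.val (G.src e))]
    refine Finset.sum_congr rfl fun w hw => Finset.sum_congr ?_ fun _ _ => rfl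
    ext e
    simp only [hD₂def, Finset.mem_filter]
    constructor
    · intro hmem
      have hkw : G.tgt e = w := by tauto
      subst hkw
      tauto
    · intro hmem
      have hkw : G.tgt e = w := by tauto
      subst hkw
      tauto
  rw [hkey1, hkey2]
  -- global facts
  have hPΓge : ∀ v ∈ PΓ, m0 ≤ φ.val v := fun v hv => Finset.inf'_le _ hv
  set F := E'.filter (fun e => φ.val (G.src e) < m0 ∧ φ.val (G.tgt e) < m0) with hFdef
  have hFsub : F ⊆ E' := Finset.filter_subset _ _
  have hnocycLB : ∀ P₂ E₂, WSAux.IsCycle G P₂ E₂ → E₂ ⊆ E' → ∀ x ∈ P₂, m0 ≤ φ.val x := by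
    intro P₂ E₂ hc hsub x hx
    obtain ⟨hne₂, hends₂, hconn₂, hdeg₂⟩ := hc
    have hP₂P' : ∀ w ∈ P₂, w ∈ P' := by
      intro w hw
      obtain ⟨e, heE₂, hor⟩ :=
        WSAux.cycle_vertex_edge (G := G) ⟨hne₂, hends₂, hconn₂, hdeg₂⟩ hw
      rcases hor with hsrc | htgt
      · exact hsrc ▸ (hE' e (hsub heE₂)).1
      · exact htgt ▸ (hE' e (hsub heE₂)).2
    exact le_trans (hmin P₂ E₂ hne₂ hP₂P' hsub hends₂ hconn₂ hdeg₂) (Finset.inf'_le _ hx)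
  have hv₀P' : v₀ ∈ P' := ((hB' v₀).mpr rfl).1
  have hOut : ∀ w, w ∈ P' → ∀ e : G.BE, e ∉ E' → (G.src e = w ∨ G.tgt e = w) → w = v₀ :=
    fun w hw e heE hor => (hB' w).mp ⟨hw, Or.inl ⟨e, heE, hor⟩⟩
  have hOutU : ∀ w, w ∈ P' → ∀ u : G.UE, u ∉ U' → G.att u = w → w = v₀ :=
    fun w hw u huU hatt => (hB' w).mp ⟨hw, Or.inr ⟨u, huU, hatt⟩⟩
  have hcount2 : (Finset.univ.filter (fun e : G.BE => G.src e = v₀ ∧ e ∉ E')).card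
      + (Finset.univ.filter (fun e : G.BE => G.tgt e = v₀ ∧ e ∉ E')).card
      + (Finset.univ.filter (fun u : G.UE => G.att u = v₀ ∧ u ∉ U')).card = 2 := by
    have hdeg3 := hv₀deg
    unfold TropGraph.degree at hdeg3
    have s1 : (Finset.univ.filter (fun e : G.BE => G.src e = v₀)).card
        = (Finset.univ.filter (fun e : G.BE => G.src e = v₀ ∧ e ∈ E')).card
          + (Finset.univ.filter (fun e : G.BE => G.src e = v₀ ∧ e ∉ E')).card := by
      have hd : Disjoint (Finset.univ.filter (fun e : G.BE => G.src e = v₀ ∧ e ∈ E'))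
          (Finset.univ.filter (fun e : G.BE => G.src e = v₀ ∧ e ∉ E')) := by
        rw [Finset.disjoint_left]
        intro e h1 h2
        simp only [Finset.mem_filter, Finset.mem_univ, true_and] at h1 h2
        tauto
      rw [← Finset.card_union_of_disjoint hd]
      congr 1
      ext e
      simp only [Finset.mem_union, Finset.mem_filter, Finset.mem_univ, true_and]
      tauto
    have s2 : (Finset.univ.filter (fun e : G.BE => G.tgt e = v₀)).card
        = (Finset.univ.filter (fun e : G.BE => G.tgt e = v₀ ∧ e ∈ E')).card
          + (Finset.univ.filter (fun e : G.BE => G.tgt e = v₀ ∧ e ∉ E')).card := by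
      have hd : Disjoint (Finset.univ.filter (fun e : G.BE => G.tgt e = v₀ ∧ e ∈ E'))
          (Finset.univ.filter (fun e : G.BE => G.tgt e = v₀ ∧ e ∉ E')) := by
        rw [Finset.disjoint_left]
        intro e h1 h2
        simp only [Finset.mem_filter, Finset.mem_univ, true_and] at h1 h2
        tauto
      rw [← Finset.card_union_of_disjoint hd]
      congr 1
      ext e
      simp only [Finset.mem_union, Finset.mem_filter, Finset.mem_univ, true_and]
      tauto
    have s3 : (Finset.univ.filter (fun u : G.UE => G.att u = v₀)).card
        = (Finset.univ.filter (fun u : G.UE => G.att u = v₀ ∧ u ∈ U')).card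
          + (Finset.univ.filter (fun u : G.UE => G.att u = v₀ ∧ u ∉ U')).card := by
      have hd : Disjoint (Finset.univ.filter (fun u : G.UE => G.att u = v₀ ∧ u ∈ U'))
          (Finset.univ.filter (fun u : G.UE => G.att u = v₀ ∧ u ∉ U')) := by
        rw [Finset.disjoint_left]
        intro u h1 h2
        simp only [Finset.mem_filter, Finset.mem_univ, true_and] at h1 h2
        tauto
      rw [← Finset.card_union_of_disjoint hd]
      congr 1
      ext u
      simp only [Finset.mem_union, Finset.mem_filter, Finset.mem_univ, true_and]
      tauto
    have hin1 : (Finset.univ.filter (fun e : G.BE => G.src e = v₀ ∧ e ∈ E')).card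
        + (Finset.univ.filter (fun e : G.BE => G.tgt e = v₀ ∧ e ∈ E')).card = 1 := by
      have hu : (Finset.univ.filter (fun e : G.BE => G.src e = v₀ ∧ e ∈ E'))
          ∪ (Finset.univ.filter (fun e : G.BE => G.tgt e = v₀ ∧ e ∈ E')) = {e₀} := by
        apply Finset.Subset.antisymm
        · intro e he
          simp only [Finset.mem_union, Finset.mem_filter, Finset.mem_univ, true_and] at he
          rcases he with ⟨h1, h2⟩ | ⟨h1, h2⟩
          · simp [he₀uniq e h2 (Or.inl h1)]
          · simp [he₀uniq e h2 (Or.inr h1)]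
        · intro e he
          simp only [Finset.mem_singleton] at he
          subst he
          rcases he₀v with h | h
          · exact Finset.mem_union_left _
              (Finset.mem_filter.mpr ⟨Finset.mem_univ _, h, he₀⟩)
          · exact Finset.mem_union_right _
              (Finset.mem_filter.mpr ⟨Finset.mem_univ _, h, he₀⟩)
      have hdisj : Disjoint (Finset.univ.filter (fun e : G.BE => G.src e = v₀ ∧ e ∈ E'))
          (Finset.univ.filter (fun e : G.BE => G.tgt e = v₀ ∧ e ∈ E')) := by
        rw [Finset.disjoint_left]
        intro e h1 h2
        simp only [Finset.mem_filter, Finset.mem_univ, true_and] at h1 h2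
        exact G.src_ne_tgt e (h1.1.trans h2.1.symm)
      have hcu := Finset.card_union_of_disjoint hdisj
      rw [hu] at hcu
      simp only [Finset.card_singleton] at hcu
      omega
    have hin3 : (Finset.univ.filter (fun u : G.UE => G.att u = v₀ ∧ u ∈ U')) = ∅ := by
      rw [Finset.filter_eq_empty_iff]
      rintro u _ ⟨hatt, huU⟩
      exact hnoU u huU hatt
    rw [s1, s2, s3, hin3] at hdeg3
    simp only [Finset.card_empty] at hdeg3
    omega
  -- THE ENGINE
  have ENGINE : ∀ u0, u0 ∈ P' → φ.val u0 < m0 →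
      Relation.ReflTransGen (WSAux.Adj G F) u0 v₀ ∧
      (∀ e ∈ E', φ.val (G.src e) < m0 →
        Relation.ReflTransGen (WSAux.Adj G F) u0 (G.src e) →
        ¬ φ.val (G.tgt e) < m0 → φ.val (G.tgt e) - φ.val (G.src e) = 1) ∧
      (∀ e ∈ E', φ.val (G.tgt e) < m0 →
        Relation.ReflTransGen (WSAux.Adj G F) u0 (G.tgt e) →
        ¬ φ.val (G.src e) < m0 → φ.val (G.src e) - φ.val (G.tgt e) = 1) := by
    intro u0 hu0P' hu0lt
    set C := P'.filter (fun v => φ.val v < m0 ∧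
      Relation.ReflTransGen (WSAux.Adj G F) u0 v) with hCdef
    have hCmem : ∀ v, v ∈ C ↔ (v ∈ P' ∧ φ.val v < m0 ∧
        Relation.ReflTransGen (WSAux.Adj G F) u0 v) := by
      intro v
      rw [hCdef]
      simp only [Finset.mem_filter]
    have hu0C : u0 ∈ C := (hCmem u0).mpr ⟨hu0P', hu0lt, .refl⟩
    have hclose : ∀ e ∈ E', ∀ x y : G.V,
        ((G.src e = x ∧ G.tgt e = y) ∨ (G.src e = y ∧ G.tgt e = x)) →
        x ∈ C → φ.val y < m0 → y ∈ C := by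
      intro e he x y hor hx hylt
      obtain ⟨hxP', hxlt, hxr⟩ := (hCmem x).mp hx
      have hyP' : y ∈ P' := by
        rcases hor with ⟨h1, h2⟩ | ⟨h1, h2⟩
        · exact h2 ▸ (hE' e he).2
        · exact h1 ▸ (hE' e he).1
      have heF : e ∈ F := by
        rw [hFdef]
        refine Finset.mem_filter.mpr ⟨he, ?_⟩
        rcases hor with ⟨h1, h2⟩ | ⟨h1, h2⟩
        · rw [h1, h2]; exact ⟨hxlt, hylt⟩
        · rw [h1, h2]; exact ⟨hylt, hxlt⟩
      exact (hCmem y).mpr ⟨hyP', hylt, hxr.tail ⟨e, heF, hor⟩⟩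
    set SCs := Finset.univ.filter (fun e : G.BE => G.src e ∈ C) with hSCs
    set TCs := Finset.univ.filter (fun e : G.BE => G.tgt e ∈ C) with hTCs
    set ACs := Finset.univ.filter (fun u : G.UE => G.att u ∈ C) with hACs
    set FCu := Finset.univ.filter (fun e : G.BE => G.src e ∈ C ∧ G.tgt e ∈ C) with hFCu
    set Bd1 := Finset.univ.filter
      (fun e : G.BE => (G.src e ∈ C ∧ G.tgt e ∉ C) ∧ e ∈ E') with hBd1def
    set N1 := Finset.univ.filter
      (fun e : G.BE => (G.src e ∈ C ∧ G.tgt e ∉ C) ∧ e ∉ E') with hN1def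
    set Bd2 := Finset.univ.filter
      (fun e : G.BE => (G.tgt e ∈ C ∧ G.src e ∉ C) ∧ e ∈ E') with hBd2def
    set N2 := Finset.univ.filter
      (fun e : G.BE => (G.tgt e ∈ C ∧ G.src e ∉ C) ∧ e ∉ E') with hN2def
    set AUs := Finset.univ.filter (fun u : G.UE => G.att u ∈ C ∧ u ∈ U') with hAUdef
    set ANs := Finset.univ.filter (fun u : G.UE => G.att u ∈ C ∧ u ∉ U') with hANdef
    have hsplitS : ∀ g : G.BE → ℝ,
        ∑ e ∈ SCs, g e = ∑ e ∈ FCu, g e + ∑ e ∈ Bd1, g e + ∑ e ∈ N1, g e := by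
      intro g
      have hd1 : Disjoint FCu Bd1 := by
        rw [Finset.disjoint_left]
        intro e h1 h2
        simp only [hFCu, hBd1def, Finset.mem_filter, Finset.mem_univ, true_and] at h1 h2
        tauto
      have hd2 : Disjoint (FCu ∪ Bd1) N1 := by
        rw [Finset.disjoint_left]
        intro e h1 h2
        simp only [hFCu, hBd1def, hN1def, Finset.mem_union, Finset.mem_filter,
          Finset.mem_univ, true_and] at h1 h2
        tauto
      have hun : SCs = (FCu ∪ Bd1) ∪ N1 := by
        ext e
        simp only [hSCs, hFCu, hBd1def, hN1def, Finset.mem_union, Finset.mem_filter,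
          Finset.mem_univ, true_and]
        tauto
      rw [hun, Finset.sum_union hd2, Finset.sum_union hd1]
    have hsplitT : ∀ g : G.BE → ℝ,
        ∑ e ∈ TCs, g e = ∑ e ∈ FCu, g e + ∑ e ∈ Bd2, g e + ∑ e ∈ N2, g e := by
      intro g
      have hd1 : Disjoint FCu Bd2 := by
        rw [Finset.disjoint_left]
        intro e h1 h2
        simp only [hFCu, hBd2def, Finset.mem_filter, Finset.mem_univ, true_and] at h1 h2
        tauto
      have hd2 : Disjoint (FCu ∪ Bd2) N2 := by
        rw [Finset.disjoint_left]
        intro e h1 h2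
        simp only [hFCu, hBd2def, hN2def, Finset.mem_union, Finset.mem_filter,
          Finset.mem_univ, true_and] at h1 h2
        tauto
      have hun : TCs = (FCu ∪ Bd2) ∪ N2 := by
        ext e
        simp only [hTCs, hFCu, hBd2def, hN2def, Finset.mem_union, Finset.mem_filter,
          Finset.mem_univ, true_and]
        tauto
      rw [hun, Finset.sum_union hd2, Finset.sum_union hd1]
    have hsplitA : ∀ g : G.UE → ℝ,
        ∑ u ∈ ACs, g u = ∑ u ∈ AUs, g u + ∑ u ∈ ANs, g u := by
      intro g
      have hd1 : Disjoint AUs ANs := by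
        rw [Finset.disjoint_left]
        intro u h1 h2
        simp only [hAUdef, hANdef, Finset.mem_filter, Finset.mem_univ, true_and] at h1 h2
        tauto
      have hun : ACs = AUs ∪ ANs := by
        ext u
        simp only [hACs, hAUdef, hANdef, Finset.mem_union, Finset.mem_filter,
          Finset.mem_univ, true_and]
        tauto
      rw [hun, Finset.sum_union hd1]
    have hLHS : ∑ v ∈ C, φ.slopeSum v
        = (∑ e ∈ SCs, (φ.val (G.tgt e) - φ.val (G.src e)))
          + (∑ e ∈ TCs, (φ.val (G.src e) - φ.val (G.tgt e)))
          + (∑ u ∈ ACs, (φ.uslope u : ℝ)) := by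
      unfold TropGraph.PL.slopeSum
      rw [Finset.sum_add_distrib, Finset.sum_add_distrib]
      rw [WSAux.fib_sum C G.src _ SCs
        (fun i => by simp [hSCs, Finset.mem_filter])]
      rw [WSAux.fib_sum C G.tgt _ TCs
        (fun i => by simp [hTCs, Finset.mem_filter])]
      rw [WSAux.fib_sum C G.att _ ACs
        (fun i => by simp [hACs, Finset.mem_filter])]
    have hRHS : ∑ v ∈ C, ((G.degree v : ℝ) - 2)
        = ((∑ e ∈ SCs, (1:ℝ)) + (∑ e ∈ TCs, (1:ℝ)) + (∑ u ∈ ACs, (1:ℝ)))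
          - 2 * C.card := by
      rw [Finset.sum_sub_distrib]
      congr 1
      · have hdeg : ∀ v ∈ C, ((G.degree v : ℝ))
            = (∑ e ∈ Finset.univ.filter (fun e => G.src e = v), (1:ℝ))
              + (∑ e ∈ Finset.univ.filter (fun e => G.tgt e = v), (1:ℝ))
              + (∑ u ∈ Finset.univ.filter (fun u => G.att u = v), (1:ℝ)) := by
          intro v _
          unfold TropGraph.degree
          push_cast
          rw [WSAux.card_real, WSAux.card_real, WSAux.card_real]
        rw [Finset.sum_congr rfl hdeg, Finset.sum_add_distrib, Finset.sum_add_distrib,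
          WSAux.fib_sum C G.src _ SCs (fun i => by simp [hSCs, Finset.mem_filter]),
          WSAux.fib_sum C G.tgt _ TCs (fun i => by simp [hTCs, Finset.mem_filter]),
          WSAux.fib_sum C G.att _ ACs (fun i => by simp [hACs, Finset.mem_filter])]
      · rw [Finset.sum_const, nsmul_eq_mul]
        ring
    have hN1fact : ∀ e ∈ N1, (φ.val (G.tgt e) - φ.val (G.src e)) = 0 ∧ G.src e = v₀ := by
      intro e he
      simp only [hN1def, Finset.mem_filter, Finset.mem_univ, true_and] at he
      obtain ⟨⟨hsC, _⟩, hnE'⟩ := he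
      have h0 := hvan1 e hnE'
      refine ⟨by rw [h0.1, h0.2]; ring, ?_⟩
      exact hOut _ ((hCmem _).mp hsC).1 e hnE' (Or.inl rfl)
    have hN2fact : ∀ e ∈ N2, (φ.val (G.src e) - φ.val (G.tgt e)) = 0 ∧ G.tgt e = v₀ := by
      intro e he
      simp only [hN2def, Finset.mem_filter, Finset.mem_univ, true_and] at he
      obtain ⟨⟨htC, _⟩, hnE'⟩ := he
      have h0 := hvan1 e hnE'
      refine ⟨by rw [h0.1, h0.2]; ring, ?_⟩
      exact hOut _ ((hCmem _).mp htC).1 e hnE' (Or.inr rfl)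
    have hANfact : ∀ u ∈ ANs, (φ.uslope u : ℝ) = 0 ∧ G.att u = v₀ := by
      intro u hu
      simp only [hANdef, Finset.mem_filter, Finset.mem_univ, true_and] at hu
      obtain ⟨haC, hnU'⟩ := hu
      have h0 := hvan2 u hnU'
      refine ⟨by exact_mod_cast congrArg (Int.cast : ℤ → ℝ) h0.2, ?_⟩
      exact hOutU _ ((hCmem _).mp haC).1 u hnU' rfl
    have hBd1ge : ∀ e ∈ Bd1, 1 ≤ φ.val (G.tgt e) - φ.val (G.src e) := by
      intro e he
      simp only [hBd1def, Finset.mem_filter, Finset.mem_univ, true_and] at he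
      obtain ⟨⟨hsC, htC⟩, heE'⟩ := he
      have hge : ¬ φ.val (G.tgt e) < m0 :=
        fun hlt => htC (hclose e heE' (G.src e) (G.tgt e) (Or.inl ⟨rfl, rfl⟩) hsC hlt)
      have hslt : φ.val (G.src e) < m0 := ((hCmem _).mp hsC).2.1
      obtain ⟨k, hk⟩ := φ.int_slope e
      rw [hk]
      have hkpos : (0:ℝ) < (k:ℝ) := by
        rw [← hk]
        have := not_lt.mp hge
        linarith
      have hk0 : (0:ℤ) < k := by exact_mod_cast hkpos
      have hk1 : (1:ℤ) ≤ k := hk0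
      exact_mod_cast hk1
    have hBd2ge : ∀ e ∈ Bd2, 1 ≤ φ.val (G.src e) - φ.val (G.tgt e) := by
      intro e he
      simp only [hBd2def, Finset.mem_filter, Finset.mem_univ, true_and] at he
      obtain ⟨⟨htC, hsC⟩, heE'⟩ := he
      have hge : ¬ φ.val (G.src e) < m0 :=
        fun hlt => hsC (hclose e heE' (G.tgt e) (G.src e) (Or.inr ⟨rfl, rfl⟩) htC hlt)
      have htlt : φ.val (G.tgt e) < m0 := ((hCmem _).mp htC).2.1
      obtain ⟨k, hk⟩ := φ.int_slope e
      have hkneg : (k:ℝ) < 0 := by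
        rw [← hk]
        have := not_lt.mp hge
        linarith
      have hk0 : k < (0:ℤ) := by exact_mod_cast hkneg
      have hk1 : (1:ℤ) ≤ -k := by omega
      have : (1:ℝ) ≤ -(k:ℝ) := by exact_mod_cast hk1
      linarith [hk]
    have hAUge : ∀ u ∈ AUs, 1 ≤ (φ.uslope u : ℝ) := by
      intro u hu
      simp only [hAUdef, Finset.mem_filter, Finset.mem_univ, true_and] at hu
      have h1 : (1:ℤ) ≤ φ.uslope u := by
        have h2 := hnn.2 u
        have h3 := hnz2 u hu.2
        omega
      exact_mod_cast h1
    have hFCuF : ∀ e ∈ FCu, e ∈ F := by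
      intro e he
      simp only [hFCu, Finset.mem_filter, Finset.mem_univ, true_and] at he
      by_cases heE' : e ∈ E'
      · rw [hFdef]
        exact Finset.mem_filter.mpr
          ⟨heE', ((hCmem _).mp he.1).2.1, ((hCmem _).mp he.2).2.1⟩
      · exfalso
        have h1 : G.src e = v₀ := hOut _ ((hCmem _).mp he.1).1 e heE' (Or.inl rfl)
        have h2 : G.tgt e = v₀ := hOut _ ((hCmem _).mp he.2).1 e heE' (Or.inr rfl)
        exact G.src_ne_tgt e (h1.trans h2.symm)
    have htreeN : FCu.card + 1 ≤ C.card := by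
      refine WSAux.tree_bound FCu.card FCu C u0 le_rfl hu0C ?_ ?_ ?_
      · intro v hv
        have hr := ((hCmem v).mp hv).2.2
        clear hv
        induction hr with
        | refl => exact .refl
        | @tail b c hub hbc ih =>
          obtain ⟨e, heF, hor⟩ := hbc
          have heE' : e ∈ E' := hFsub heF
          have hlt : φ.val (G.src e) < m0 ∧ φ.val (G.tgt e) < m0 := by
            have h := heF
            rw [hFdef] at h
            exact (Finset.mem_filter.mp h).2
          have hbC : b ∈ C := by
            refine (hCmem b).mpr ⟨?_, ?_, hub⟩
            · rcases hor with ⟨h1, _⟩ | ⟨_, h2⟩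
              · exact h1 ▸ (hE' e heE').1
              · exact h2 ▸ (hE' e heE').2
            · rcases hor with ⟨h1, _⟩ | ⟨_, h2⟩
              · exact h1 ▸ hlt.1
              · exact h2 ▸ hlt.2
          have hcC : c ∈ C := by
            refine (hCmem c).mpr ⟨?_, ?_, hub.tail ⟨e, heF, hor⟩⟩
            · rcases hor with ⟨_, h2⟩ | ⟨h1, _⟩
              · exact h2 ▸ (hE' e heE').2
              · exact h1 ▸ (hE' e heE').1
            · rcases hor with ⟨_, h2⟩ | ⟨h1, _⟩
              · exact h2 ▸ hlt.2
              · exact h1 ▸ hlt.1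
          have heFCu : e ∈ FCu := by
            rw [hFCu]
            refine Finset.mem_filter.mpr ⟨Finset.mem_univ e, ?_, ?_⟩
            · rcases hor with ⟨h1, _⟩ | ⟨h1, _⟩
              · rw [h1]; exact hbC
              · rw [h1]; exact hcC
            · rcases hor with ⟨_, h2⟩ | ⟨_, h2⟩
              · rw [h2]; exact hcC
              · rw [h2]; exact hbC
          exact ih.tail ⟨e, heFCu, hor⟩
      · intro e he
        simp only [hFCu, Finset.mem_filter, Finset.mem_univ, true_and] at he
        exact he
      · intro P₂ E₂ hc hsub
        obtain ⟨x, hx⟩ := hc.1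
        have hxC : x ∈ C := by
          obtain ⟨e, heE₂, hor⟩ := WSAux.cycle_vertex_edge hc hx
          have heFCu := hsub heE₂
          simp only [hFCu, Finset.mem_filter, Finset.mem_univ, true_and] at heFCu
          rcases hor with h | h
          · exact h ▸ heFCu.1
          · exact h ▸ heFCu.2
        have hxlt : φ.val x < m0 := ((hCmem x).mp hxC).2.1
        have hsubE' : E₂ ⊆ E' := fun e' he' => hFsub (hFCuF e' (hsub he'))
        exact absurd (hnocycLB P₂ E₂ hc hsubE' x hx) (not_le.mpr hxlt)
    have htree : (FCu.card : ℝ) + 1 ≤ (C.card : ℝ) := by exact_mod_cast htreeN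
    have hKsum : ∑ v ∈ C, φ.slopeSum v ≤ ∑ v ∈ C, ((G.degree v : ℝ) - 2) :=
      Finset.sum_le_sum (fun v _ => hK v)
    have hcancel : ∑ e ∈ FCu, (φ.val (G.tgt e) - φ.val (G.src e))
        + ∑ e ∈ FCu, (φ.val (G.src e) - φ.val (G.tgt e)) = 0 := by
      rw [← Finset.sum_add_distrib]
      exact Finset.sum_eq_zero (fun e _ => by ring)
    have hN1z : ∑ e ∈ N1, (φ.val (G.tgt e) - φ.val (G.src e)) = 0 :=
      Finset.sum_eq_zero (fun e he => (hN1fact e he).1)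
    have hN2z : ∑ e ∈ N2, (φ.val (G.src e) - φ.val (G.tgt e)) = 0 :=
      Finset.sum_eq_zero (fun e he => (hN2fact e he).1)
    have hANz : ∑ u ∈ ANs, (φ.uslope u : ℝ) = 0 :=
      Finset.sum_eq_zero (fun u hu => (hANfact u hu).1)
    have hc1 : ∑ e ∈ Bd1, (1:ℝ) ≤ ∑ e ∈ Bd1, (φ.val (G.tgt e) - φ.val (G.src e)) :=
      Finset.sum_le_sum hBd1ge
    have hc2 : ∑ e ∈ Bd2, (1:ℝ) ≤ ∑ e ∈ Bd2, (φ.val (G.src e) - φ.val (G.tgt e)) :=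
      Finset.sum_le_sum hBd2ge
    have hcU : ∑ u ∈ AUs, (1:ℝ) ≤ ∑ u ∈ AUs, (φ.uslope u : ℝ) :=
      Finset.sum_le_sum hAUge
    have hNsub1 : N1 ⊆ Finset.univ.filter (fun e : G.BE => G.src e = v₀ ∧ e ∉ E') := by
      intro e he
      have h1 := (hN1fact e he).2
      simp only [hN1def, Finset.mem_filter, Finset.mem_univ, true_and] at he
      simp only [Finset.mem_filter, Finset.mem_univ, true_and]
      exact ⟨h1, he.2⟩
    have hNsub2 : N2 ⊆ Finset.univ.filter (fun e : G.BE => G.tgt e = v₀ ∧ e ∉ E') := by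
      intro e he
      have h1 := (hN2fact e he).2
      simp only [hN2def, Finset.mem_filter, Finset.mem_univ, true_and] at he
      simp only [Finset.mem_filter, Finset.mem_univ, true_and]
      exact ⟨h1, he.2⟩
    have hNsubU : ANs ⊆ Finset.univ.filter (fun u : G.UE => G.att u = v₀ ∧ u ∉ U') := by
      intro u hu
      have h1 := (hANfact u hu).2
      simp only [hANdef, Finset.mem_filter, Finset.mem_univ, true_and] at hu
      simp only [Finset.mem_filter, Finset.mem_univ, true_and]
      exact ⟨h1, hu.2⟩
    have hNboundN : N1.card + N2.card + ANs.card ≤ 2 := by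
      have h1 := Finset.card_le_card hNsub1
      have h2 := Finset.card_le_card hNsub2
      have h3 := Finset.card_le_card hNsubU
      omega
    have hNbound : (N1.card : ℝ) + (N2.card : ℝ) + (ANs.card : ℝ) ≤ 2 := by
      exact_mod_cast hNboundN
    have hcr1 : ∑ e ∈ N1, (1:ℝ) = (N1.card:ℝ) := (WSAux.card_real _).symm
    have hcr2 : ∑ e ∈ N2, (1:ℝ) = (N2.card:ℝ) := (WSAux.card_real _).symm
    have hcr3 : ∑ u ∈ ANs, (1:ℝ) = (ANs.card:ℝ) := (WSAux.card_real _).symm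
    have hcrF : ∑ e ∈ FCu, (1:ℝ) = (FCu.card:ℝ) := (WSAux.card_real _).symm
    have hs1 := hsplitS (fun e => φ.val (G.tgt e) - φ.val (G.src e))
    have hs2 := hsplitT (fun e => φ.val (G.src e) - φ.val (G.tgt e))
    have hs3 := hsplitA (fun u => ((φ.uslope u : ℝ)))
    have hs4 := hsplitS (fun _ => (1:ℝ))
    have hs5 := hsplitT (fun _ => (1:ℝ))
    have hs6 := hsplitA (fun _ => (1:ℝ))
    have hmaster : ∑ e ∈ Bd1, (φ.val (G.tgt e) - φ.val (G.src e))
        + ∑ e ∈ Bd2, (φ.val (G.src e) - φ.val (G.tgt e))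
        + ∑ u ∈ AUs, (φ.uslope u : ℝ)
        ≤ ∑ e ∈ Bd1, (1:ℝ) + ∑ e ∈ Bd2, (1:ℝ) + ∑ u ∈ AUs, (1:ℝ)
          + ((N1.card:ℝ) + (N2.card:ℝ) + (ANs.card:ℝ)) - 2 := by
      linarith [hKsum, hLHS, hRHS, hs1, hs2, hs3, hs4, hs5, hs6,
        hcancel, hN1z, hN2z, hANz, htree, hcr1, hcr2, hcr3, hcrF]
    by_cases hv₀C : v₀ ∈ C
    · have hA : Relation.ReflTransGen (WSAux.Adj G F) u0 v₀ :=
        ((hCmem v₀).mp hv₀C).2.2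
      have hX1 : ∑ e ∈ Bd1, (φ.val (G.tgt e) - φ.val (G.src e)) = ∑ e ∈ Bd1, (1:ℝ) := by
        linarith [hmaster, hNbound, hc1, hc2, hcU]
      have hX2 : ∑ e ∈ Bd2, (φ.val (G.src e) - φ.val (G.tgt e)) = ∑ e ∈ Bd2, (1:ℝ) := by
        linarith [hmaster, hNbound, hc1, hc2, hcU]
      have hpt1 : ∀ e ∈ Bd1, (φ.val (G.tgt e) - φ.val (G.src e)) - 1 = 0 := by
        apply (Finset.sum_eq_zero_iff_of_nonneg
          (fun e he => by linarith [hBd1ge e he])).mp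
        rw [Finset.sum_sub_distrib]
        linarith [hX1]
      have hpt2 : ∀ e ∈ Bd2, (φ.val (G.src e) - φ.val (G.tgt e)) - 1 = 0 := by
        apply (Finset.sum_eq_zero_iff_of_nonneg
          (fun e he => by linarith [hBd2ge e he])).mp
        rw [Finset.sum_sub_distrib]
        linarith [hX2]
      refine ⟨hA, ?_, ?_⟩
      · intro e heE' hslt hrtg htge
        have heBd1 : e ∈ Bd1 := by
          rw [hBd1def]
          refine Finset.mem_filter.mpr ⟨Finset.mem_univ e, ⟨?_, ?_⟩, heE'⟩
          · exact (hCmem _).mpr ⟨(hE' e heE').1, hslt, hrtg⟩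
          · intro htC
            exact htge ((hCmem _).mp htC).2.1
        have := hpt1 e heBd1
        linarith
      · intro e heE' htlt hrtg hsge
        have heBd2 : e ∈ Bd2 := by
          rw [hBd2def]
          refine Finset.mem_filter.mpr ⟨Finset.mem_univ e, ⟨?_, ?_⟩, heE'⟩
          · exact (hCmem _).mpr ⟨(hE' e heE').2, htlt, hrtg⟩
          · intro hsC
            exact hsge ((hCmem _).mp hsC).2.1
        have := hpt2 e heBd2
        linarith
    · exfalso
      have hN1e : N1 = ∅ := by
        rw [Finset.eq_empty_iff_forall_notMem]
        intro e he
        have h1 := (hN1fact e he).2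
        simp only [hN1def, Finset.mem_filter, Finset.mem_univ, true_and] at he
        exact hv₀C (h1 ▸ he.1.1)
      have hN2e : N2 = ∅ := by
        rw [Finset.eq_empty_iff_forall_notMem]
        intro e he
        have h1 := (hN2fact e he).2
        simp only [hN2def, Finset.mem_filter, Finset.mem_univ, true_and] at he
        exact hv₀C (h1 ▸ he.1.1)
      have hANe : ANs = ∅ := by
        rw [Finset.eq_empty_iff_forall_notMem]
        intro u hu
        have h1 := (hANfact u hu).2
        simp only [hANdef, Finset.mem_filter, Finset.mem_univ, true_and] at hu
        exact hv₀C (h1 ▸ hu.1)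
      have z1 : (N1.card : ℝ) = 0 := by rw [hN1e]; simp
      have z2 : (N2.card : ℝ) = 0 := by rw [hN2e]; simp
      have z3 : (ANs.card : ℝ) = 0 := by rw [hANe]; simp
      linarith [hmaster, hc1, hc2, hcU, z1, z2, z3]
  -- ENDGAME
  rcases Finset.eq_empty_or_nonempty (D₁ ∪ D₂) with hDe | ⟨f, hf⟩
  · have h12 := Finset.union_eq_empty.mp hDe
    rw [h12.1, h12.2]
    simp
  · have hextract : ∀ g ∈ D₁ ∪ D₂, ∃ wg ug : G.V,
        ((G.src g = wg ∧ G.tgt g = ug) ∨ (G.src g = ug ∧ G.tgt g = wg)) ∧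
        wg ∈ PΓ ∧ φ.val wg = m0 ∧ φ.val ug < m0 ∧ ug ∈ P' ∧ g ∈ E' ∧ g ∉ EΓ := by
      intro g hg
      rcases Finset.mem_union.mp hg with hg1 | hg2
      · obtain ⟨hgE', hgEΓ, hgS, hglt⟩ := Finset.mem_filter.mp hg1
        obtain ⟨hPΓ', hval⟩ := Finset.mem_filter.mp hgS
        exact ⟨G.src g, G.tgt g, Or.inl ⟨rfl, rfl⟩, hPΓ', hval, by linarith,
          (hE' g hgE').2, hgE', hgEΓ⟩
      · obtain ⟨hgE', hgEΓ, hgS, hglt⟩ := Finset.mem_filter.mp hg2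
        obtain ⟨hPΓ', hval⟩ := Finset.mem_filter.mp hgS
        exact ⟨G.tgt g, G.src g, Or.inr ⟨rfl, rfl⟩, hPΓ', hval, by linarith,
          (hE' g hgE').1, hgE', hgEΓ⟩
    have huniq : ∀ f' ∈ D₁ ∪ D₂, f' = f := by
      intro f' hf'
      by_contra hne
      obtain ⟨wf, uf, hor, hwPΓ, hwval, hult, huP', hfE', hfEΓ⟩ := hextract f hf
      obtain ⟨wf', uf', hor', hwPΓ', hwval', hult', huP'', hfE'', hfEΓ'⟩ :=
        hextract f' hf'
      have hEf := ENGINE uf huP' hult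
      have hEf' := ENGINE uf' huP'' hult'
      have hconnu : Relation.ReflTransGen (WSAux.Adj G F) uf uf' :=
        hEf.1.trans (WSAux.rtg_symm hEf'.1)
      have hreach : Relation.ReflTransGen (WSAux.Adj G (insert f' (F ∪ EΓ))) uf wf := by
        have p1 : Relation.ReflTransGen (WSAux.Adj G (insert f' (F ∪ EΓ))) uf uf' :=
          WSAux.rtg_mono
            (fun x hx => Finset.mem_insert_of_mem (Finset.mem_union_left _ hx)) hconnu
        have p2 : Relation.ReflTransGen (WSAux.Adj G (insert f' (F ∪ EΓ))) uf' wf' :=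
          .single ⟨f', Finset.mem_insert_self _ _, hor'.symm⟩
        have p3 : Relation.ReflTransGen (WSAux.Adj G (insert f' (F ∪ EΓ))) wf' wf := by
          have h := hΓconn wf' hwPΓ' wf hwPΓ
          exact WSAux.rtg_mono
            (fun x hx => Finset.mem_insert_of_mem (Finset.mem_union_right _ hx)) h
        exact (p1.trans p2).trans p3
      have hfno : f ∉ insert f' (F ∪ EΓ) := by
        intro hmem
        rcases Finset.mem_insert.mp hmem with h | h
        · exact hne h.symm
        · rcases Finset.mem_union.mp h with h1 | h1
          · rw [hFdef] at h1
            have h2 := (Finset.mem_filter.mp h1).2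
            rcases hor with ⟨h3, _⟩ | ⟨_, h3⟩
            · rw [h3, hwval] at h2
              exact absurd h2.1 (lt_irrefl m0)
            · rw [h3, hwval] at h2
              exact absurd h2.2 (lt_irrefl m0)
          · exact hfEΓ h1
      obtain ⟨P₂, E₂, hcyc2, hsubE₂, hufP₂⟩ :=
        WSAux.cycle_of_reconnect hor.symm hfno hreach
      have hsubE' : E₂ ⊆ E' := by
        intro e he
        rcases Finset.mem_insert.mp (hsubE₂ he) with h | h
        · exact h ▸ hfE'
        · rcases Finset.mem_insert.mp h with h1 | h1
          · exact h1 ▸ hfE''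
          · rcases Finset.mem_union.mp h1 with h2 | h2
            · exact hFsub h2
            · exact hEΓsub h2
      exact absurd (hnocycLB P₂ E₂ hcyc2 hsubE' uf hufP₂) (not_le.mpr hult)
    have hD₁sub : D₁ ⊆ {f} :=
      fun e he => Finset.mem_singleton.mpr (huniq e (Finset.mem_union_left _ he))
    have hD₂sub : D₂ ⊆ {f} :=
      fun e he => Finset.mem_singleton.mpr (huniq e (Finset.mem_union_right _ he))
    rcases Finset.mem_union.mp hf with hfD₁ | hfD₂
    · have hD₂e : D₂ = ∅ := by
        rw [Finset.eq_empty_iff_forall_notMem]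
        intro e he
        have hef : e = f := Finset.mem_singleton.mp (hD₂sub he)
        subst hef
        have h1 := (Finset.mem_filter.mp hfD₁).2.2.2
        have h2 := (Finset.mem_filter.mp he).2.2.2
        linarith
      have hD₁f : D₁ = {f} :=
        Finset.Subset.antisymm hD₁sub (Finset.singleton_subset_iff.mpr hfD₁)
      rw [hD₁f, hD₂e, Finset.sum_singleton, Finset.sum_empty, add_zero]
      obtain ⟨hfE'2, hfEΓ2, hfS, hflt⟩ := Finset.mem_filter.mp hfD₁
      obtain ⟨hsrcPΓ, hsrcval⟩ := Finset.mem_filter.mp hfS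
      have htgtlt : φ.val (G.tgt f) < m0 := by linarith
      have htgtP' : G.tgt f ∈ P' := (hE' f hfE'2).2
      have hEf2 := ENGINE (G.tgt f) htgtP' htgtlt
      have hone := hEf2.2.2 f hfE'2 htgtlt .refl
        (by rw [hsrcval]; exact lt_irrefl m0)
      linarith
    · have hD₁e : D₁ = ∅ := by
        rw [Finset.eq_empty_iff_forall_notMem]
        intro e he
        have hef : e = f := Finset.mem_singleton.mp (hD₁sub he)
        subst hef
        have h1 := (Finset.mem_filter.mp hfD₂).2.2.2
        have h2 := (Finset.mem_filter.mp he).2.2.2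
        linarith
      have hD₂f : D₂ = {f} :=
        Finset.Subset.antisymm hD₂sub (Finset.singleton_subset_iff.mpr hfD₂)
      rw [hD₁e, hD₂f, Finset.sum_singleton, Finset.sum_empty, zero_add]
      obtain ⟨hfE'2, hfEΓ2, hfS, hflt⟩ := Finset.mem_filter.mp hfD₂
      obtain ⟨htgtPΓ, htgtval⟩ := Finset.mem_filter.mp hfS
      have hsrclt : φ.val (G.src f) < m0 := by linarith
      have hsrcP' : G.src f ∈ P' := (hE' f hfE'2).1
      have hEf2 := ENGINE (G.src f) hsrcP' hsrclt
      have hone := hEf2.2.1 f hfE'2 hsrclt .refl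
        (by rw [htgtval]; exact lt_irrefl m0)
      linarith
end

section
/- (Tree case.) Suppose Γ is a tree, so that the nodal curve (C_Γ)₀ has arithmetic genus 0. Then φ is C₀-ample on Γ in Γ' if and only if deg(D_φ|_{ℙ¹_v}) ≥ 1 for every vertex v of Γ with φ(v) = h. -/
attribute [local instance] Classical.propDecidable

/-- The order of vanishing of a rational function `f` on `ℙ¹ = ℂ ∪ {∞}`
(modeled as `Option ℂ`, with `none` the point at infinity) at a point `q`;
negative at poles.  (For `f = 0` this gives the junk value `0`, i.e. `div 0 = 0`.) -/
noncomputable def ordAt (f : RatFunc ℂ) : Option ℂ → ℤ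
  | Option.none => (f.denom.natDegree : ℤ) - (f.num.natDegree : ℤ)
  | Option.some a => (f.num.rootMultiplicity a : ℤ) - (f.denom.rootMultiplicity a : ℤ)

/-- The value of a rational function `f` on `ℙ¹ = ℂ ∪ {∞}` at a point `q`
(junk value where `f` is not regular). -/
noncomputable def evalAt (f : RatFunc ℂ) : Option ℂ → ℂ
  | Option.none => if f.num.natDegree = f.denom.natDegree then
      f.num.leadingCoeff / f.denom.leadingCoeff else 0
  | Option.some a => RatFunc.eval (RingHom.id ℂ) a f

namespace TropGraph

/-- The coefficient at the point `q` of the component `ℙ¹_v` of the divisor `D_φ`: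
`D_φ = Σ_{v, φ(v) = h} Σ_{e ∈ E_v^∂, s_φ(v,e) < 0} (−s_φ(v,e))·(p_e^v)`, where
`E_v^∂` is the set of edges of `Γ'` not in `Γ` incident to `v`, and `p_e^v` is the
boundary point `pS e`/`pT e`/`pU e` of `ℙ¹_v` assigned to the endpoint `v` of `e`. -/
noncomputable def Dcoef {n : ℕ} (G : TropGraph n) (φ : PL G)
    (E' : Finset G.BE) (U' : Finset G.UE) (EΓ : Finset G.BE)
    (pS pT : G.BE → Option ℂ) (pU : G.UE → Option ℂ) (h : ℝ)
    (v : G.V) (q : Option ℂ) : ℝ :=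
  if φ.val v = h then
    (∑ e ∈ E'.filter (fun e => e ∉ EΓ ∧ G.src e = v ∧
        φ.val (G.tgt e) - φ.val (G.src e) < 0 ∧ pS e = q),
        (φ.val (G.src e) - φ.val (G.tgt e))) +
      (∑ e ∈ E'.filter (fun e => e ∉ EΓ ∧ G.tgt e = v ∧
        φ.val (G.src e) - φ.val (G.tgt e) < 0 ∧ pT e = q),
        (φ.val (G.tgt e) - φ.val (G.src e))) +
      ∑ u ∈ U'.filter (fun u => G.att u = v ∧ φ.uslope u < 0 ∧ pU u = q),
        (-(φ.uslope u) : ℝ)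
  else 0

/-- The degree of the part `D_φ|_{ℙ¹_v}` of the divisor `D_φ` supported on the
component `ℙ¹_v`. -/
noncomputable def DdegAt {n : ℕ} (G : TropGraph n) (φ : PL G)
    (E' : Finset G.BE) (U' : Finset G.UE) (EΓ : Finset G.BE) (h : ℝ) (v : G.V) : ℝ :=
  if φ.val v = h then
    (∑ e ∈ E'.filter (fun e => e ∉ EΓ ∧ G.src e = v ∧
        φ.val (G.tgt e) - φ.val (G.src e) < 0),
        (φ.val (G.src e) - φ.val (G.tgt e))) +
      (∑ e ∈ E'.filter (fun e => e ∉ EΓ ∧ G.tgt e = v ∧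
        φ.val (G.src e) - φ.val (G.tgt e) < 0),
        (φ.val (G.tgt e) - φ.val (G.src e))) +
      ∑ u ∈ U'.filter (fun u => G.att u = v ∧ φ.uslope u < 0), (-(φ.uslope u) : ℝ)
  else 0

/-- The total degree `deg(D_φ)` of the divisor `D_φ`. -/
noncomputable def Ddeg {n : ℕ} (G : TropGraph n) (φ : PL G) (PΓ : Finset G.V)
    (E' : Finset G.BE) (U' : Finset G.UE) (EΓ : Finset G.BE) (h : ℝ) : ℝ :=
  ∑ v ∈ PΓ, DdegAt G φ E' U' EΓ h v

/-- `φ` is `C₀`-ample on `Γ` in `Γ'`: there is a family `(f_v)_{v ∈ V(Γ)}` of rational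
functions on the components `ℙ¹_v` of the nodal curve `(C_Γ)₀` with
`div(f_v) + D_φ|_{ℙ¹_v} ≥ 0` (in particular each `f_v` is regular at the node points),
matching at the nodes (`f_v(p_e^v) = f_w(p_e^w)` for every edge `e = vw` of `Γ`), and
with `f_v` nonconstant precisely for the vertices `v` with `φ(v) = h`. -/
noncomputable def C0Ample {n : ℕ} (G : TropGraph n) (φ : PL G)
    (PΓ : Finset G.V) (E' : Finset G.BE) (U' : Finset G.UE) (EΓ : Finset G.BE)
    (pS pT : G.BE → Option ℂ) (pU : G.UE → Option ℂ) (h : ℝ) : Prop :=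
  ∃ f : G.V → RatFunc ℂ,
    (∀ v ∈ PΓ, ∀ q : Option ℂ,
      0 ≤ Dcoef G φ E' U' EΓ pS pT pU h v q + (ordAt (f v) q : ℝ)) ∧
    (∀ e ∈ EΓ, evalAt (f (G.src e)) (pS e) = evalAt (f (G.tgt e)) (pT e)) ∧
    ∀ v ∈ PΓ, ((¬ ∃ c : ℂ, f v = RatFunc.C c) ↔ φ.val v = h)

end TropGraph

/-! ### Auxiliary lemmas about rational functions -/

lemma eval₂_id' (a : ℂ) (P : Polynomial ℂ) : Polynomial.eval₂ (RingHom.id ℂ) a P = P.eval a :=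
  rfl

lemma ordAt_C (c : ℂ) (q : Option ℂ) : ordAt (RatFunc.C c) q = 0 := by
  cases q with
  | none => simp [ordAt, RatFunc.num_C, RatFunc.denom_C]
  | some a =>
    simp only [ordAt, RatFunc.num_C, RatFunc.denom_C]
    rcases eq_or_ne c 0 with rfl | hc
    · simp [Polynomial.rootMultiplicity_zero, Polynomial.rootMultiplicity_eq_zero,
        Polynomial.IsRoot]
    · rw [Polynomial.rootMultiplicity_eq_zero (by simp [Polynomial.IsRoot, hc]),
        Polynomial.rootMultiplicity_eq_zero (by simp [Polynomial.IsRoot])]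
      simp

lemma evalAt_C (c : ℂ) (q : Option ℂ) : evalAt (RatFunc.C c) q = c := by
  cases q with
  | none => simp [evalAt, RatFunc.num_C, RatFunc.denom_C]
  | some a => simp [evalAt, RatFunc.eval_C]

lemma nonconst_of_ordAt_ne {f : RatFunc ℂ} {q : Option ℂ} (h : ordAt f q ≠ 0) :
    ¬∃ c : ℂ, f = RatFunc.C c := by
  rintro ⟨c, rfl⟩; exact h (ordAt_C c q)

lemma num_denom_of_div {P Q : Polynomial ℂ} (hQ : Q.Monic) (hcop : IsCoprime P Q) :
    (algebraMap (Polynomial ℂ) (RatFunc ℂ) P / algebraMap _ _ Q).num = P ∧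
    (algebraMap (Polynomial ℂ) (RatFunc ℂ) P / algebraMap _ _ Q).denom = Q := by
  set x := algebraMap (Polynomial ℂ) (RatFunc ℂ) P / algebraMap _ _ Q with hx
  have hQ0 : Q ≠ 0 := hQ.ne_zero
  have key : x.num * Q = P * x.denom := (RatFunc.num_mul_eq_mul_denom_iff hQ0).mpr rfl
  have h1 : x.denom ∣ Q := by
    refine ((RatFunc.isCoprime_num_denom x).symm.dvd_of_dvd_mul_left ?_)
    exact key ▸ Dvd.intro_left P rfl
  have h2 : Q ∣ x.denom := by
    refine hcop.symm.dvd_of_dvd_mul_left ?_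
    exact key.symm ▸ Dvd.intro_left x.num rfl
  have hden : x.denom = Q :=
    Polynomial.eq_of_monic_of_associated (RatFunc.monic_denom x) hQ (associated_of_dvd_dvd h1 h2)
  refine ⟨?_, hden⟩
  have := key
  rw [hden] at this
  exact mul_right_cancel₀ hQ0 this

lemma coprime_of_eval_ne_zero {P : Polynomial ℂ} {c : ℂ} (h : P.eval c ≠ 0) :
    IsCoprime P (Polynomial.X - Polynomial.C c) := by
  refine (((Polynomial.irreducible_X_sub_C c).coprime_iff_not_dvd).mpr ?_).symm
  rw [Polynomial.dvd_iff_isRoot]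
  exact h

lemma mob (q p : Option ℂ) (hqp : q ≠ p) (μ : ℂ) :
    ∃ g : RatFunc ℂ,
      evalAt g p = μ ∧ (-1 : ℤ) ≤ ordAt g q ∧ (∀ r, r ≠ q → 0 ≤ ordAt g r) ∧
        ¬∃ c : ℂ, g = RatFunc.C c := by
  classical
  cases q with
  | none =>
    obtain ⟨a, rfl⟩ : ∃ a : ℂ, p = Option.some a := by
      cases p with
      | none => exact absurd rfl hqp
      | some a => exact ⟨a, rfl⟩
    set g := algebraMap (Polynomial ℂ) (RatFunc ℂ) (Polynomial.X + Polynomial.C (μ - a))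
      with hg
    have hnum : g.num = Polynomial.X + Polynomial.C (μ - a) := RatFunc.num_algebraMap _
    have hden : g.denom = 1 := RatFunc.denom_algebraMap _
    have hdeg : (Polynomial.X + Polynomial.C (μ - a)).natDegree = 1 :=
      Polynomial.natDegree_X_add_C _
    refine ⟨g, ?_, ?_, ?_, ?_⟩
    · simp only [evalAt, RatFunc.eval, hnum, hden, eval₂_id']
      simp
    · simp only [ordAt, hnum, hden, hdeg, Polynomial.natDegree_one]
      norm_num
    · intro r hr
      obtain ⟨b, rfl⟩ : ∃ b : ℂ, r = Option.some b := by
        cases r with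
        | none => exact absurd rfl hr
        | some b => exact ⟨b, rfl⟩
      have h1 : Polynomial.rootMultiplicity b (1 : Polynomial ℂ) = 0 :=
        Polynomial.rootMultiplicity_eq_zero (by simp [Polynomial.IsRoot])
      simp only [ordAt, hnum, hden, h1]
      omega
    · apply nonconst_of_ordAt_ne (q := Option.none)
      simp only [ordAt, hnum, hden, hdeg, Polynomial.natDegree_one]
      norm_num
  | some c =>
    set Q : Polynomial ℂ := Polynomial.X - Polynomial.C c with hQdef
    have hQm : Q.Monic := Polynomial.monic_X_sub_C c
    have hrmQ : Polynomial.rootMultiplicity c Q = 1 := by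
      simp [hQdef, Polynomial.rootMultiplicity_X_sub_C]
    have hrmQ' : ∀ b : ℂ, b ≠ c → Polynomial.rootMultiplicity b Q = 0 := by
      intro b hb
      exact Polynomial.rootMultiplicity_eq_zero
        (by simp [hQdef, Polynomial.IsRoot, sub_eq_zero, hb])
    have hQdeg : Q.natDegree = 1 := Polynomial.natDegree_X_sub_C c
    have hQlead : Q.leadingCoeff = 1 := hQm.leadingCoeff
    cases p with
    | none =>
      set P : Polynomial ℂ := Polynomial.C μ * Polynomial.X + Polynomial.C (1 - μ * c) with hPdef
      have hPc : P.eval c = 1 := by simp [hPdef]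
      have hcop : IsCoprime P Q := coprime_of_eval_ne_zero (by rw [hPc]; exact one_ne_zero)
      obtain ⟨hnum, hden⟩ := num_denom_of_div hQm hcop
      set g := algebraMap (Polynomial ℂ) (RatFunc ℂ) P / algebraMap _ _ Q with hg
      have hPrm : Polynomial.rootMultiplicity c P = 0 :=
        Polynomial.rootMultiplicity_eq_zero (by simp [Polynomial.IsRoot, hPc])
      have hPdeg : P.natDegree ≤ 1 := by
        refine le_trans (Polynomial.natDegree_add_le _ _) ?_
        simp only [Polynomial.natDegree_C, max_le_iff]
        refine ⟨le_trans Polynomial.natDegree_mul_le ?_, by norm_num⟩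
        simp [Polynomial.natDegree_C, Polynomial.natDegree_X]
      refine ⟨g, ?_, ?_, ?_, ?_⟩
      · rcases eq_or_ne μ 0 with rfl | hμ
        · have hP1 : P = 1 := by simp [hPdef]
          simp only [evalAt, hnum, hden, hP1, Polynomial.natDegree_one, hQdeg]
          norm_num
        · simp only [evalAt, hnum, hden, Polynomial.natDegree_linear hμ, hQdeg,
            Polynomial.leadingCoeff_linear hμ, hQlead, div_one]
          rw [hPdef, Polynomial.natDegree_linear hμ, Polynomial.leadingCoeff_linear hμ]
          simp
      · simp only [ordAt, hnum, hden, hPrm, hrmQ]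
        norm_num
      · intro r hr
        cases r with
        | none =>
          simp only [ordAt, hnum, hden, hQdeg]
          have := hPdeg; omega
        | some b =>
          have hb : b ≠ c := by simpa using hr
          simp only [ordAt, hnum, hden, hrmQ' b hb]
          omega
      · apply nonconst_of_ordAt_ne (q := Option.some c)
        simp only [ordAt, hnum, hden, hPrm, hrmQ]
        norm_num
    | some a =>
      have hac : a ≠ c := fun h => hqp (by rw [h])
      have hca : c - a ≠ 0 := sub_ne_zero.mpr fun h => hac h.symm
      set P : Polynomial ℂ := Polynomial.C (μ + 1) * Polynomial.X + Polynomial.C (-(μ * c) - a)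
        with hPdef
      have hPc : P.eval c = c - a := by simp [hPdef]; ring
      have hcop : IsCoprime P Q := coprime_of_eval_ne_zero (by rw [hPc]; exact hca)
      obtain ⟨hnum, hden⟩ := num_denom_of_div hQm hcop
      set g := algebraMap (Polynomial ℂ) (RatFunc ℂ) P / algebraMap _ _ Q with hg
      have hPrm : Polynomial.rootMultiplicity c P = 0 :=
        Polynomial.rootMultiplicity_eq_zero (by simp [Polynomial.IsRoot, hPc, hca])
      have hPdeg : P.natDegree ≤ 1 := by
        refine le_trans (Polynomial.natDegree_add_le _ _) ?_
        simp only [Polynomial.natDegree_C, max_le_iff]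
        refine ⟨le_trans Polynomial.natDegree_mul_le ?_, by norm_num⟩
        simp [Polynomial.natDegree_C, Polynomial.natDegree_X]
      refine ⟨g, ?_, ?_, ?_, ?_⟩
      · have hPa : P.eval a = μ * (a - c) := by simp [hPdef]; ring
        have hQa : Q.eval a = a - c := by simp [hQdef]
        simp only [evalAt, RatFunc.eval, hnum, hden, eval₂_id', hPa, hQa]
        have hac' : a - c ≠ 0 := sub_ne_zero.mpr hac
        field_simp
      · simp only [ordAt, hnum, hden, hPrm, hrmQ]
        norm_num
      · intro r hr
        cases r with
        | none =>
          simp only [ordAt, hnum, hden, hQdeg]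
          have := hPdeg; omega
        | some b =>
          have hb : b ≠ c := by simpa using hr
          simp only [ordAt, hnum, hden, hrmQ' b hb]
          omega
      · apply nonconst_of_ordAt_ne (q := Option.some c)
        simp only [ordAt, hnum, hden, hPrm, hrmQ]
        norm_num

lemma exists_pole_of_nonconst {f : RatFunc ℂ} (h : ¬∃ c : ℂ, f = RatFunc.C c) :
    ∃ q : Option ℂ, ordAt f q ≤ -1 := by
  have hf0 : f ≠ 0 := by
    rintro rfl; exact h ⟨0, by simp⟩
  rcases Nat.eq_zero_or_pos f.denom.natDegree with hd | hd
  · have hden1 : f.denom = 1 := (Polynomial.Monic.natDegree_eq_zero (RatFunc.monic_denom f)).mp hd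
    have hnumdeg : f.num.natDegree ≠ 0 := by
      intro h0
      obtain ⟨c, hc⟩ := Polynomial.natDegree_eq_zero.mp h0
      apply h
      refine ⟨c, ?_⟩
      have := RatFunc.num_div_denom f
      rw [hden1, ← hc] at this
      simp only [map_one, div_one] at this
      rw [← this, RatFunc.algebraMap_C]
    exact ⟨Option.none, by simp only [ordAt, hden1, Polynomial.natDegree_one]; omega⟩
  · obtain ⟨a, ha⟩ := Complex.exists_root (f := f.denom)
      (by rwa [← Polynomial.natDegree_pos_iff_degree_pos])
    have hrm : 0 < Polynomial.rootMultiplicity a f.denom :=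
      (Polynomial.rootMultiplicity_pos (RatFunc.denom_ne_zero f)).mpr ha
    have hnum : Polynomial.rootMultiplicity a f.num = 0 := by
      apply Polynomial.rootMultiplicity_eq_zero
      intro hroot
      have h1 : (Polynomial.X - Polynomial.C a) ∣ f.num := Polynomial.dvd_iff_isRoot.mpr hroot
      have h2 : (Polynomial.X - Polynomial.C a) ∣ f.denom := Polynomial.dvd_iff_isRoot.mpr ha
      have := (RatFunc.isCoprime_num_denom f).isUnit_of_dvd' h1 h2
      exact (Polynomial.not_isUnit_X_sub_C a) this
    exact ⟨Option.some a, by simp only [ordAt, hnum]; omega⟩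

/-! ### Auxiliary lemmas about the divisor -/

namespace TropGraph

variable {n : ℕ} (G : TropGraph n) (φ : PL G) (E' : Finset G.BE) (U' : Finset G.UE)
  (EΓ : Finset G.BE) (pS pT : G.BE → Option ℂ) (pU : G.UE → Option ℂ) (h : ℝ)

lemma Dcoef_nonneg (v : G.V) (q : Option ℂ) : 0 ≤ Dcoef G φ E' U' EΓ pS pT pU h v q := by
  unfold Dcoef
  split
  · refine add_nonneg (add_nonneg ?_ ?_) ?_ <;> refine Finset.sum_nonneg fun e he => ?_
    · have := (Finset.mem_filter.mp he).2.2.2.1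
      linarith
    · have := (Finset.mem_filter.mp he).2.2.2.1
      linarith
    · have : φ.uslope e < 0 := (Finset.mem_filter.mp he).2.2.1
      have : (φ.uslope e : ℝ) < 0 := by exact_mod_cast this
      linarith
  · exact le_refl _

lemma DdegAt_nonneg (v : G.V) : 0 ≤ DdegAt G φ E' U' EΓ h v := by
  unfold DdegAt
  split
  · refine add_nonneg (add_nonneg ?_ ?_) ?_ <;> refine Finset.sum_nonneg fun e he => ?_
    · have := (Finset.mem_filter.mp he).2.2.2
      linarith
    · have := (Finset.mem_filter.mp he).2.2.2
      linarith
    · have : φ.uslope e < 0 := (Finset.mem_filter.mp he).2.2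
      have : (φ.uslope e : ℝ) < 0 := by exact_mod_cast this
      linarith
  · exact le_refl _

lemma Dcoef_le_DdegAt (v : G.V) (q : Option ℂ) :
    Dcoef G φ E' U' EΓ pS pT pU h v q ≤ DdegAt G φ E' U' EΓ h v := by
  unfold Dcoef DdegAt
  split
  · refine add_le_add (add_le_add ?_ ?_) ?_ <;>
      refine Finset.sum_le_sum_of_subset_of_nonneg ?_ fun e he _ => ?_
    · intro e he
      rw [Finset.mem_filter] at he ⊢
      exact ⟨he.1, he.2.1, he.2.2.1, he.2.2.2.1⟩
    · have := (Finset.mem_filter.mp he).2.2.2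
      linarith
    · intro e he
      rw [Finset.mem_filter] at he ⊢
      exact ⟨he.1, he.2.1, he.2.2.1, he.2.2.2.1⟩
    · have := (Finset.mem_filter.mp he).2.2.2
      linarith
    · intro u hu
      rw [Finset.mem_filter] at hu ⊢
      exact ⟨hu.1, hu.2.1, hu.2.2.1⟩
    · have : φ.uslope e < 0 := (Finset.mem_filter.mp he).2.2
      have : (φ.uslope e : ℝ) < 0 := by exact_mod_cast this
      linarith
  · exact le_refl _

lemma exists_big_coef (v : G.V) (hv : φ.val v = h)
    (hd : 1 ≤ DdegAt G φ E' U' EΓ h v) :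
    ∃ q : Option ℂ, 1 ≤ Dcoef G φ E' U' EΓ pS pT pU h v q ∧
      ((∃ e ∈ E', e ∉ EΓ ∧ G.src e = v ∧ pS e = q) ∨
       (∃ e ∈ E', e ∉ EΓ ∧ G.tgt e = v ∧ pT e = q) ∨
       (∃ u ∈ U', G.att u = v ∧ pU u = q)) := by
  classical
  rw [DdegAt, if_pos hv] at hd
  set A := ∑ e ∈ E'.filter (fun e => e ∉ EΓ ∧ G.src e = v ∧
      φ.val (G.tgt e) - φ.val (G.src e) < 0), (φ.val (G.src e) - φ.val (G.tgt e)) with hA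
  set B := ∑ e ∈ E'.filter (fun e => e ∉ EΓ ∧ G.tgt e = v ∧
      φ.val (G.src e) - φ.val (G.tgt e) < 0), (φ.val (G.tgt e) - φ.val (G.src e)) with hB
  set C := ∑ u ∈ U'.filter (fun u => G.att u = v ∧ φ.uslope u < 0), (-(φ.uslope u) : ℝ) with hC
  have hsum : A ≠ 0 ∨ B ≠ 0 ∨ C ≠ 0 := by
    by_contra hcon
    push_neg at hcon
    rw [hcon.1, hcon.2.1, hcon.2.2] at hd
    norm_num at hd
  -- helper: term bounds
  have key : ∀ (q : Option ℂ), 1 ≤ (if φ.val v = h then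
      (∑ e ∈ E'.filter (fun e => e ∉ EΓ ∧ G.src e = v ∧
          φ.val (G.tgt e) - φ.val (G.src e) < 0 ∧ pS e = q),
          (φ.val (G.src e) - φ.val (G.tgt e))) +
        (∑ e ∈ E'.filter (fun e => e ∉ EΓ ∧ G.tgt e = v ∧
          φ.val (G.src e) - φ.val (G.tgt e) < 0 ∧ pT e = q),
          (φ.val (G.tgt e) - φ.val (G.src e))) +
        ∑ u ∈ U'.filter (fun u => G.att u = v ∧ φ.uslope u < 0 ∧ pU u = q),
          (-(φ.uslope u) : ℝ)
      else 0) → 1 ≤ Dcoef G φ E' U' EΓ pS pT pU h v q := fun q hq => hq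
  rcases hsum with hA0 | hB0 | hC0
  · obtain ⟨e, he, hne⟩ := Finset.exists_ne_zero_of_sum_ne_zero hA0
    rw [Finset.mem_filter] at he
    obtain ⟨heE, heΓ, hesrc, heslope⟩ := he
    refine ⟨pS e, ?_, Or.inl ⟨e, heE, heΓ, hesrc, rfl⟩⟩
    apply key
    rw [if_pos hv]
    obtain ⟨k, hk⟩ := φ.int_slope e
    have hterm : 1 ≤ φ.val (G.src e) - φ.val (G.tgt e) := by
      have hkneg : (k : ℝ) < 0 := by rw [← hk]; exact heslope
      have hk0 : k < 0 := by exact_mod_cast hkneg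
      have hk1 : k ≤ -1 := by omega
      have hk1' : (k : ℝ) ≤ -1 := by exact_mod_cast hk1
      linarith [hk]
    have hmem : e ∈ E'.filter (fun e' => e' ∉ EΓ ∧ G.src e' = v ∧
        φ.val (G.tgt e') - φ.val (G.src e') < 0 ∧ pS e' = pS e) := by
      rw [Finset.mem_filter]; exact ⟨heE, heΓ, hesrc, heslope, rfl⟩
    have hAq : 1 ≤ ∑ e' ∈ E'.filter (fun e' => e' ∉ EΓ ∧ G.src e' = v ∧
        φ.val (G.tgt e') - φ.val (G.src e') < 0 ∧ pS e' = pS e),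
        (φ.val (G.src e') - φ.val (G.tgt e')) := by
      refine le_trans hterm (Finset.single_le_sum
        (f := fun e' => φ.val (G.src e') - φ.val (G.tgt e')) (fun e' he' => ?_) hmem)
      have := (Finset.mem_filter.mp he').2.2.2.1
      linarith
    have hBq : 0 ≤ ∑ e' ∈ E'.filter (fun e' => e' ∉ EΓ ∧ G.tgt e' = v ∧
        φ.val (G.src e') - φ.val (G.tgt e') < 0 ∧ pT e' = pS e),
        (φ.val (G.tgt e') - φ.val (G.src e')) := by
      refine Finset.sum_nonneg fun e' he' => ?_
      have := (Finset.mem_filter.mp he').2.2.2.1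
      linarith
    have hCq : 0 ≤ ∑ u ∈ U'.filter (fun u => G.att u = v ∧ φ.uslope u < 0 ∧ pU u = pS e),
        (-(φ.uslope u) : ℝ) := by
      refine Finset.sum_nonneg fun u hu => ?_
      have : φ.uslope u < 0 := (Finset.mem_filter.mp hu).2.2.1
      have : (φ.uslope u : ℝ) < 0 := by exact_mod_cast this
      linarith
    linarith
  · obtain ⟨e, he, hne⟩ := Finset.exists_ne_zero_of_sum_ne_zero hB0
    rw [Finset.mem_filter] at he
    obtain ⟨heE, heΓ, hetgt, heslope⟩ := he
    refine ⟨pT e, ?_, Or.inr (Or.inl ⟨e, heE, heΓ, hetgt, rfl⟩)⟩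
    apply key
    rw [if_pos hv]
    obtain ⟨k, hk⟩ := φ.int_slope e
    have hterm : 1 ≤ φ.val (G.tgt e) - φ.val (G.src e) := by
      have hkpos : (0 : ℝ) < (k : ℝ) := by rw [← hk]; linarith
      have hk0 : 0 < k := by exact_mod_cast hkpos
      have hk1 : 1 ≤ k := by omega
      have hk1' : (1 : ℝ) ≤ (k : ℝ) := by exact_mod_cast hk1
      linarith [hk]
    have hmem : e ∈ E'.filter (fun e' => e' ∉ EΓ ∧ G.tgt e' = v ∧
        φ.val (G.src e') - φ.val (G.tgt e') < 0 ∧ pT e' = pT e) := by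
      rw [Finset.mem_filter]; exact ⟨heE, heΓ, hetgt, heslope, rfl⟩
    have hBq : 1 ≤ ∑ e' ∈ E'.filter (fun e' => e' ∉ EΓ ∧ G.tgt e' = v ∧
        φ.val (G.src e') - φ.val (G.tgt e') < 0 ∧ pT e' = pT e),
        (φ.val (G.tgt e') - φ.val (G.src e')) := by
      refine le_trans hterm (Finset.single_le_sum
        (f := fun e' => φ.val (G.tgt e') - φ.val (G.src e')) (fun e' he' => ?_) hmem)
      have := (Finset.mem_filter.mp he').2.2.2.1
      linarith
    have hAq : 0 ≤ ∑ e' ∈ E'.filter (fun e' => e' ∉ EΓ ∧ G.src e' = v ∧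
        φ.val (G.tgt e') - φ.val (G.src e') < 0 ∧ pS e' = pT e),
        (φ.val (G.src e') - φ.val (G.tgt e')) := by
      refine Finset.sum_nonneg fun e' he' => ?_
      have := (Finset.mem_filter.mp he').2.2.2.1
      linarith
    have hCq : 0 ≤ ∑ u ∈ U'.filter (fun u => G.att u = v ∧ φ.uslope u < 0 ∧ pU u = pT e),
        (-(φ.uslope u) : ℝ) := by
      refine Finset.sum_nonneg fun u hu => ?_
      have : φ.uslope u < 0 := (Finset.mem_filter.mp hu).2.2.1
      have : (φ.uslope u : ℝ) < 0 := by exact_mod_cast this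
      linarith
    linarith
  · obtain ⟨u, hu, hne⟩ := Finset.exists_ne_zero_of_sum_ne_zero hC0
    rw [Finset.mem_filter] at hu
    obtain ⟨huU, huatt, huslope⟩ := hu
    refine ⟨pU u, ?_, Or.inr (Or.inr ⟨u, huU, huatt, rfl⟩)⟩
    apply key
    rw [if_pos hv]
    have hterm : 1 ≤ (-(φ.uslope u) : ℝ) := by
      have : φ.uslope u ≤ -1 := by omega
      have : (φ.uslope u : ℝ) ≤ -1 := by exact_mod_cast this
      linarith
    have hmem : u ∈ U'.filter (fun u' => G.att u' = v ∧ φ.uslope u' < 0 ∧ pU u' = pU u) := by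
      rw [Finset.mem_filter]; exact ⟨huU, huatt, huslope, rfl⟩
    have hCq : 1 ≤ ∑ u' ∈ U'.filter (fun u' => G.att u' = v ∧ φ.uslope u' < 0 ∧ pU u' = pU u),
        (-(φ.uslope u') : ℝ) := by
      refine le_trans hterm (Finset.single_le_sum
        (f := fun u' => (-(φ.uslope u') : ℝ)) (fun u' hu' => ?_) hmem)
      have : φ.uslope u' < 0 := (Finset.mem_filter.mp hu').2.2.1
      have : (φ.uslope u' : ℝ) < 0 := by exact_mod_cast this
      linarith
    have hAq : 0 ≤ ∑ e' ∈ E'.filter (fun e' => e' ∉ EΓ ∧ G.src e' = v ∧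
        φ.val (G.tgt e') - φ.val (G.src e') < 0 ∧ pS e' = pU u),
        (φ.val (G.src e') - φ.val (G.tgt e')) := by
      refine Finset.sum_nonneg fun e' he' => ?_
      have := (Finset.mem_filter.mp he').2.2.2.1
      linarith
    have hBq : 0 ≤ ∑ e' ∈ E'.filter (fun e' => e' ∉ EΓ ∧ G.tgt e' = v ∧
        φ.val (G.src e') - φ.val (G.tgt e') < 0 ∧ pT e' = pU u),
        (φ.val (G.tgt e') - φ.val (G.src e')) := by
      refine Finset.sum_nonneg fun e' he' => ?_
      have := (Finset.mem_filter.mp he').2.2.2.1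
      linarith
    linarith


lemma Dcoef_erase_eq (e₀ : G.BE) (hs : h ≤ φ.val (G.src e₀)) (ht : h ≤ φ.val (G.tgt e₀))
    (v : G.V) (q : Option ℂ) :
    Dcoef G φ E' U' (EΓ.erase e₀) pS pT pU h v q = Dcoef G φ E' U' EΓ pS pT pU h v q := by
  classical
  unfold Dcoef
  split_ifs with hv
  · congr 2
    · refine Finset.sum_congr ?_ fun _ _ => rfl
      apply Finset.filter_congr
      intro e heE
      by_cases he : e = e₀
      · subst he
        simp only [Finset.mem_erase, ne_eq, not_and]
        constructor
        · rintro ⟨-, h2, h3, h4⟩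
          exfalso
          rw [h2, hv] at h3
          linarith [hs, ht]
        · rintro ⟨-, h2, h3, h4⟩
          exfalso
          rw [h2, hv] at h3
          linarith [hs, ht]
      · simp only [Finset.mem_erase, ne_eq, he, not_false_iff, true_and]
    · refine Finset.sum_congr ?_ fun _ _ => rfl
      apply Finset.filter_congr
      intro e heE
      by_cases he : e = e₀
      · subst he
        simp only [Finset.mem_erase, ne_eq, not_and]
        constructor
        · rintro ⟨-, h2, h3, h4⟩
          exfalso
          rw [h2, hv] at h3
          linarith [hs, ht]
        · rintro ⟨-, h2, h3, h4⟩
          exfalso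
          rw [h2, hv] at h3
          linarith [hs, ht]
      · simp only [Finset.mem_erase, ne_eq, he, not_false_iff, true_and]
  · rfl

lemma DdegAt_erase_eq (e₀ : G.BE) (hs : h ≤ φ.val (G.src e₀)) (ht : h ≤ φ.val (G.tgt e₀))
    (v : G.V) :
    DdegAt G φ E' U' (EΓ.erase e₀) h v = DdegAt G φ E' U' EΓ h v := by
  classical
  unfold DdegAt
  split_ifs with hv
  · congr 2
    · refine Finset.sum_congr ?_ fun _ _ => rfl
      apply Finset.filter_congr
      intro e heE
      by_cases he : e = e₀
      · subst he
        simp only [Finset.mem_erase, ne_eq, not_and]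
        constructor
        · rintro ⟨-, h2, h3⟩
          exfalso
          rw [h2, hv] at h3
          linarith [hs, ht]
        · rintro ⟨-, h2, h3⟩
          exfalso
          rw [h2, hv] at h3
          linarith [hs, ht]
      · simp only [Finset.mem_erase, ne_eq, he, not_false_iff, true_and]
    · refine Finset.sum_congr ?_ fun _ _ => rfl
      apply Finset.filter_congr
      intro e heE
      by_cases he : e = e₀
      · subst he
        simp only [Finset.mem_erase, ne_eq, not_and]
        constructor
        · rintro ⟨-, h2, h3⟩
          exfalso
          rw [h2, hv] at h3
          linarith [hs, ht]
        · rintro ⟨-, h2, h3⟩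
          exfalso
          rw [h2, hv] at h3
          linarith [hs, ht]
      · simp only [Finset.mem_erase, ne_eq, he, not_false_iff, true_and]
  · rfl

lemma exists_leaf (PΓ : Finset G.V) (EΓ : Finset G.BE)
    (hEΓ : ∀ e ∈ EΓ, G.src e ∈ PΓ ∧ G.tgt e ∈ PΓ)
    (hΓconn : ∀ a ∈ PΓ, ∀ b ∈ PΓ, Relation.ReflTransGen
      (fun a b => ∃ e ∈ EΓ, (G.src e = a ∧ G.tgt e = b) ∨ (G.src e = b ∧ G.tgt e = a)) a b)
    (hacyc : EΓ.card + 1 = PΓ.card) (h2 : 2 ≤ PΓ.card) :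
    ∃ ℓ ∈ PΓ, ∃ e₀ ∈ EΓ, (G.src e₀ = ℓ ∨ G.tgt e₀ = ℓ) ∧
      ∀ e ∈ EΓ, (G.src e = ℓ ∨ G.tgt e = ℓ) → e = e₀ := by
  classical
  set d : G.V → ℕ := fun v =>
    (EΓ.filter (fun e => G.src e = v)).card + (EΓ.filter (fun e => G.tgt e = v)).card with hd
  have hsum : ∑ v ∈ PΓ, d v = 2 * EΓ.card := by
    have h1 : ∑ v ∈ PΓ, (EΓ.filter (fun e => G.src e = v)).card = EΓ.card :=
      (Finset.card_eq_sum_card_fiberwise (fun e he => (hEΓ e he).1)).symm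
    have h2' : ∑ v ∈ PΓ, (EΓ.filter (fun e => G.tgt e = v)).card = EΓ.card :=
      (Finset.card_eq_sum_card_fiberwise (fun e he => (hEΓ e he).2)).symm
    rw [hd]
    rw [Finset.sum_add_distrib, h1, h2']
    ring
  have hone : ∀ v ∈ PΓ, 1 ≤ d v := by
    intro v hv
    obtain ⟨w, hw, hwv⟩ := Finset.exists_mem_ne (s := PΓ) (by omega) v
    have hpath := hΓconn v hv w hw
    rcases (Relation.ReflTransGen.cases_head hpath) with heq | ⟨c, hstep, -⟩
    · exact absurd heq.symm hwv
    · obtain ⟨e, heΓ, hor⟩ := hstep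
      rcases hor with ⟨h1, -⟩ | ⟨-, h2'⟩
      · have : e ∈ EΓ.filter (fun e => G.src e = v) := Finset.mem_filter.mpr ⟨heΓ, h1⟩
        have := Finset.card_pos.mpr ⟨e, this⟩
        simp only [hd]
        omega
      · have : e ∈ EΓ.filter (fun e => G.tgt e = v) := Finset.mem_filter.mpr ⟨heΓ, h2'⟩
        have := Finset.card_pos.mpr ⟨e, this⟩
        simp only [hd]
        omega
  have hleaf : ∃ ℓ ∈ PΓ, d ℓ = 1 := by
    by_contra hcon
    push_neg at hcon
    have : ∀ v ∈ PΓ, 2 ≤ d v := by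
      intro v hv
      have := hone v hv
      have := hcon v hv
      omega
    have : 2 * PΓ.card ≤ ∑ v ∈ PΓ, d v := by
      calc 2 * PΓ.card = ∑ _v ∈ PΓ, 2 := by rw [Finset.sum_const]; ring
      _ ≤ ∑ v ∈ PΓ, d v := Finset.sum_le_sum this
    omega
  obtain ⟨ℓ, hℓ, hdℓ⟩ := hleaf
  rw [hd] at hdℓ
  simp only at hdℓ
  rcases Nat.add_eq_one_iff.mp hdℓ with ⟨hc1, hc2⟩ | ⟨hc1, hc2⟩
  · -- src-filter empty, tgt-filter singleton
    obtain ⟨e₀, he₀⟩ := Finset.card_eq_one.mp hc2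
    have he₀Γ : e₀ ∈ EΓ ∧ G.tgt e₀ = ℓ := by
      have : e₀ ∈ EΓ.filter (fun e => G.tgt e = ℓ) := he₀ ▸ Finset.mem_singleton_self e₀
      exact Finset.mem_filter.mp this
    refine ⟨ℓ, hℓ, e₀, he₀Γ.1, Or.inr he₀Γ.2, ?_⟩
    intro e heΓ hor
    rcases hor with h1 | h1
    · exfalso
      have : e ∈ EΓ.filter (fun e => G.src e = ℓ) := Finset.mem_filter.mpr ⟨heΓ, h1⟩
      rw [Finset.card_eq_zero.mp hc1] at this
      exact absurd this (Finset.notMem_empty e)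
    · have : e ∈ EΓ.filter (fun e => G.tgt e = ℓ) := Finset.mem_filter.mpr ⟨heΓ, h1⟩
      rw [he₀] at this
      exact Finset.mem_singleton.mp this
  · obtain ⟨e₀, he₀⟩ := Finset.card_eq_one.mp hc1
    have he₀Γ : e₀ ∈ EΓ ∧ G.src e₀ = ℓ := by
      have : e₀ ∈ EΓ.filter (fun e => G.src e = ℓ) := he₀ ▸ Finset.mem_singleton_self e₀
      exact Finset.mem_filter.mp this
    refine ⟨ℓ, hℓ, e₀, he₀Γ.1, Or.inl he₀Γ.2, ?_⟩
    intro e heΓ hor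
    rcases hor with h1 | h1
    · have : e ∈ EΓ.filter (fun e => G.src e = ℓ) := Finset.mem_filter.mpr ⟨heΓ, h1⟩
      rw [he₀] at this
      exact Finset.mem_singleton.mp this
    · exfalso
      have : e ∈ EΓ.filter (fun e => G.tgt e = ℓ) := Finset.mem_filter.mpr ⟨heΓ, h1⟩
      rw [Finset.card_eq_zero.mp hc2] at this
      exact absurd this (Finset.notMem_empty e)

lemma conn_erase (EΓ : Finset G.BE) (e₀ : G.BE) (ℓ o : G.V) (hℓo : o ≠ ℓ)
    (hends : (G.src e₀ = ℓ ∧ G.tgt e₀ = o) ∨ (G.src e₀ = o ∧ G.tgt e₀ = ℓ))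
    (huniq : ∀ e ∈ EΓ, (G.src e = ℓ ∨ G.tgt e = ℓ) → e = e₀)
    {a b : G.V} (ha : a ≠ ℓ) (hb : b ≠ ℓ)
    (hpath : Relation.ReflTransGen
      (fun x y => ∃ e ∈ EΓ, (G.src e = x ∧ G.tgt e = y) ∨ (G.src e = y ∧ G.tgt e = x)) a b) :
    Relation.ReflTransGen
      (fun x y => ∃ e ∈ EΓ.erase e₀,
        (G.src e = x ∧ G.tgt e = y) ∨ (G.src e = y ∧ G.tgt e = x)) a b := by
  classical
  have key : Relation.ReflTransGen
      (fun x y => ∃ e ∈ EΓ.erase e₀,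
        (G.src e = x ∧ G.tgt e = y) ∨ (G.src e = y ∧ G.tgt e = x)) a
      (if b = ℓ then o else b) := by
    clear hb
    induction hpath with
    | refl => rw [if_neg ha]
    | @tail c d hac hcd ih =>
      obtain ⟨e, heΓ, hor⟩ := hcd
      by_cases he : e = e₀
      · subst he
        have hcd' : (c = ℓ ∧ d = o) ∨ (c = o ∧ d = ℓ) := by
          rcases hor with ⟨h1, h2⟩ | ⟨h1, h2⟩ <;> rcases hends with ⟨h3, h4⟩ | ⟨h3, h4⟩
          · exact Or.inl ⟨by rw [← h1, h3], by rw [← h2, h4]⟩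
          · exact Or.inr ⟨by rw [← h1, h3], by rw [← h2, h4]⟩
          · exact Or.inr ⟨by rw [← h2, h4], by rw [← h1, h3]⟩
          · exact Or.inl ⟨by rw [← h2, h4], by rw [← h1, h3]⟩
        rcases hcd' with ⟨hc, hd⟩ | ⟨hc, hd⟩
        · subst hc hd
          rw [if_neg hℓo]
          rw [if_pos rfl] at ih
          exact ih
        · subst hc hd
          rw [if_pos rfl]
          rw [if_neg hℓo] at ih
          exact ih
      · have he' : e ∈ EΓ.erase e₀ := Finset.mem_erase.mpr ⟨he, heΓ⟩
        have hcne : c ≠ ℓ := by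
          intro hc
          apply he
          apply huniq e heΓ
          rcases hor with ⟨h1, -⟩ | ⟨-, h2⟩
          · exact Or.inl (by rw [h1, hc])
          · exact Or.inr (by rw [h2, hc])
        have hdne : d ≠ ℓ := by
          intro hdd
          apply he
          apply huniq e heΓ
          rcases hor with ⟨-, h2⟩ | ⟨h1, -⟩
          · exact Or.inr (by rw [h2, hdd])
          · exact Or.inl (by rw [h1, hdd])
        rw [if_neg hcne] at ih
        rw [if_neg hdne]
        exact ih.tail ⟨e, he', hor⟩
  rwa [if_neg hb] at key

end TropGraph

open TropGraph in
lemma aux_c0ample {n : ℕ} (G : TropGraph n) (φ : TropGraph.PL G)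
    (E' : Finset G.BE) (U' : Finset G.UE)
    (pS pT : G.BE → Option ℂ) (pU : G.UE → Option ℂ) (h : ℝ) :
    ∀ N : ℕ, ∀ (PΓ : Finset G.V) (EΓ : Finset G.BE),
      PΓ.card ≤ N → PΓ.Nonempty → EΓ ⊆ E' →
      (∀ e ∈ EΓ, G.src e ∈ PΓ ∧ G.tgt e ∈ PΓ) →
      (∀ a ∈ PΓ, ∀ b ∈ PΓ, Relation.ReflTransGen
        (fun a b => ∃ e ∈ EΓ, (G.src e = a ∧ G.tgt e = b) ∨ (G.src e = b ∧ G.tgt e = a)) a b) →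
      EΓ.card + 1 = PΓ.card →
      (∀ v ∈ PΓ,
        (∀ e₁ ∈ E', ∀ e₂ ∈ E', G.src e₁ = v → G.src e₂ = v → pS e₁ = pS e₂ → e₁ = e₂) ∧
        (∀ e₁ ∈ E', ∀ e₂ ∈ E', G.tgt e₁ = v → G.tgt e₂ = v → pT e₁ = pT e₂ → e₁ = e₂) ∧
        (∀ u₁ ∈ U', ∀ u₂ ∈ U', G.att u₁ = v → G.att u₂ = v → pU u₁ = pU u₂ → u₁ = u₂) ∧
        (∀ e₁ ∈ E', ∀ e₂ ∈ E', G.src e₁ = v → G.tgt e₂ = v → pS e₁ ≠ pT e₂) ∧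
        (∀ e₁ ∈ E', ∀ u ∈ U', G.src e₁ = v → G.att u = v → pS e₁ ≠ pU u) ∧
        (∀ e₁ ∈ E', ∀ u ∈ U', G.tgt e₁ = v → G.att u = v → pT e₁ ≠ pU u)) →
      (∀ v ∈ PΓ, h ≤ φ.val v) →
      (∀ v ∈ PΓ, φ.val v = h → 1 ≤ DdegAt G φ E' U' EΓ h v) →
      C0Ample G φ PΓ E' U' EΓ pS pT pU h := by
  intro N
  induction N with
  | zero =>
    intro PΓ EΓ hcard hne _ _ _ _ _ _ _
    have := Finset.card_pos.mpr hne
    omega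
  | succ N ih =>
    intro PΓ EΓ hcard hne hEΓsub hEΓ hconn hacyc hdist hmin hdeg
    by_cases hsmall : PΓ.card ≤ 1
    · -- base case : a single vertex, no edges
      have hcard1 : PΓ.card = 1 := le_antisymm hsmall (Finset.card_pos.mpr hne)
      obtain ⟨v, hPv⟩ := Finset.card_eq_one.mp hcard1
      have hvP : v ∈ PΓ := hPv ▸ Finset.mem_singleton_self v
      have hmem : ∀ w ∈ PΓ, w = v := fun w hw => Finset.mem_singleton.mp (hPv ▸ hw)
      have hEΓ0 : EΓ = ∅ := Finset.card_eq_zero.mp (by omega)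
      by_cases hφ : φ.val v = h
      · obtain ⟨q₀, hq₀, -⟩ :=
          exists_big_coef G φ E' U' EΓ pS pT pU h v hφ (hdeg v hvP hφ)
        obtain ⟨g, -, hg1, hg2, hg3⟩ := mob q₀ (if q₀ = Option.none then Option.some 0
          else Option.none) (by cases q₀ <;> simp) 0
        refine ⟨fun _ => g, ?_, ?_, ?_⟩
        · intro w hw q
          rw [hmem w hw]
          by_cases hq : q = q₀
          · subst hq
            have : ((-1 : ℤ) : ℝ) ≤ (ordAt g q : ℝ) := by exact_mod_cast hg1
            push_cast at this
            linarith
          · have h0 : (0 : ℝ) ≤ (ordAt g q : ℝ) := by exact_mod_cast hg2 q hq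
            have := Dcoef_nonneg G φ E' U' EΓ pS pT pU h v q
            linarith
        · intro e he
          rw [hEΓ0] at he
          exact absurd he (Finset.notMem_empty e)
        · intro w hw
          rw [hmem w hw]
          exact ⟨fun _ => hφ, fun _ => hg3⟩
      · refine ⟨fun _ => RatFunc.C 0, ?_, ?_, ?_⟩
        · intro w hw q
          rw [hmem w hw, ordAt_C]
          have := Dcoef_nonneg G φ E' U' EΓ pS pT pU h v q
          push_cast
          linarith
        · intro e he
          rw [hEΓ0] at he
          exact absurd he (Finset.notMem_empty e)
        · intro w hw
          rw [hmem w hw]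
          exact ⟨fun hc => absurd ⟨0, rfl⟩ hc, fun hh => absurd hh hφ⟩
    · -- inductive step : remove a leaf ℓ
      push_neg at hsmall
      obtain ⟨ℓ, hℓP, e₀, he₀Γ, he₀end, huniq⟩ :=
        exists_leaf G PΓ EΓ hEΓ hconn hacyc (by omega)
      set o := if G.src e₀ = ℓ then G.tgt e₀ else G.src e₀ with ho
      have hends : (G.src e₀ = ℓ ∧ G.tgt e₀ = o) ∨ (G.src e₀ = o ∧ G.tgt e₀ = ℓ) := by
        by_cases hsrc : G.src e₀ = ℓ
        · exact Or.inl ⟨hsrc, by rw [ho, if_pos hsrc]⟩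
        · exact Or.inr ⟨by rw [ho, if_neg hsrc], he₀end.resolve_left hsrc⟩
      have hoℓ : o ≠ ℓ := by
        rcases hends with ⟨h1, h2⟩ | ⟨h1, h2⟩
        · rw [← h1, ← h2]
          exact fun hc => G.src_ne_tgt e₀ hc.symm
        · rw [← h1, ← h2]
          exact G.src_ne_tgt e₀
      have hoP : o ∈ PΓ := by
        rcases hends with ⟨-, h2⟩ | ⟨h1, -⟩
        · exact h2 ▸ (hEΓ e₀ he₀Γ).2
        · exact h1 ▸ (hEΓ e₀ he₀Γ).1
      set PΓ' := PΓ.erase ℓ with hPΓ'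
      set EΓ' := EΓ.erase e₀ with hEΓ'def
      have hcP' : PΓ'.card = PΓ.card - 1 := Finset.card_erase_of_mem hℓP
      have hcE' : EΓ'.card = EΓ.card - 1 := Finset.card_erase_of_mem he₀Γ
      have hEcard : 1 ≤ EΓ.card := Finset.card_pos.mpr ⟨e₀, he₀Γ⟩
      have hoP' : o ∈ PΓ' := Finset.mem_erase.mpr ⟨hoℓ, hoP⟩
      have hs0 : h ≤ φ.val (G.src e₀) := hmin _ (hEΓ e₀ he₀Γ).1
      have ht0 : h ≤ φ.val (G.tgt e₀) := hmin _ (hEΓ e₀ he₀Γ).2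
      have hmemP' : ∀ w ∈ PΓ', w ∈ PΓ := fun w hw => Finset.mem_of_mem_erase hw
      have hEΓ'' : ∀ e ∈ EΓ', G.src e ∈ PΓ' ∧ G.tgt e ∈ PΓ' := by
        intro e he
        obtain ⟨hne0, heΓ⟩ := Finset.mem_erase.mp he
        have h1 := hEΓ e heΓ
        constructor
        · exact Finset.mem_erase.mpr ⟨fun hc => hne0 (huniq e heΓ (Or.inl hc)), h1.1⟩
        · exact Finset.mem_erase.mpr ⟨fun hc => hne0 (huniq e heΓ (Or.inr hc)), h1.2⟩
      obtain ⟨f', hdiv', hmatch', hnc'⟩ := ih PΓ' EΓ' (by omega) ⟨o, hoP'⟩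
        (fun e he => hEΓsub (Finset.mem_of_mem_erase he))
        hEΓ''
        (fun a ha b hb => conn_erase G EΓ e₀ ℓ o hoℓ hends huniq
          (Finset.mem_erase.mp ha).1 (Finset.mem_erase.mp hb).1
          (hconn a (hmemP' a ha) b (hmemP' b hb)))
        (by omega)
        (fun v hv => hdist v (hmemP' v hv))
        (fun v hv => hmin v (hmemP' v hv))
        (fun v hv hveq => by
          rw [DdegAt_erase_eq G φ E' U' EΓ h e₀ hs0 ht0 v]
          exact hdeg v (hmemP' v hv) hveq)
      set pL := if G.src e₀ = ℓ then pS e₀ else pT e₀ with hpL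
      set pO := if G.src e₀ = ℓ then pT e₀ else pS e₀ with hpO
      set μ := evalAt (f' o) pO with hμ
      have hgex : ∃ g : RatFunc ℂ, evalAt g pL = μ ∧
          (∀ q, 0 ≤ Dcoef G φ E' U' EΓ pS pT pU h ℓ q + (ordAt g q : ℝ)) ∧
          ((¬∃ c : ℂ, g = RatFunc.C c) ↔ φ.val ℓ = h) := by
        by_cases hφℓ : φ.val ℓ = h
        · obtain ⟨q₀, hq₀, hq₀b⟩ :=
            exists_big_coef G φ E' U' EΓ pS pT pU h ℓ hφℓ (hdeg ℓ hℓP hφℓ)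
          have hq₀pL : q₀ ≠ pL := by
            obtain ⟨hd1, hd2, hd3, hd4, hd5, hd6⟩ := hdist ℓ hℓP
            rcases hends with ⟨hsrc, htgt⟩ | ⟨hsrc, htgt⟩
            · rw [hpL, if_pos hsrc]
              rcases hq₀b with ⟨e, heE, heΓ, hesrc, rfl⟩ | ⟨e, heE, heΓ, hetgt, rfl⟩ |
                ⟨u, huU, huatt, rfl⟩
              · intro hc
                have := hd1 e heE e₀ (hEΓsub he₀Γ) hesrc hsrc hc
                rw [this] at heΓ
                exact heΓ he₀Γ
              · intro hc
                exact (hd4 e₀ (hEΓsub he₀Γ) e heE hsrc hetgt) hc.symm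
              · intro hc
                exact (hd5 e₀ (hEΓsub he₀Γ) u huU hsrc huatt) hc.symm
            · have hsrcne : ¬ G.src e₀ = ℓ := by rw [hsrc]; exact hoℓ
              rw [hpL, if_neg hsrcne]
              rcases hq₀b with ⟨e, heE, heΓ, hesrc, rfl⟩ | ⟨e, heE, heΓ, hetgt, rfl⟩ |
                ⟨u, huU, huatt, rfl⟩
              · intro hc
                exact (hd4 e heE e₀ (hEΓsub he₀Γ) hesrc htgt) hc
              · intro hc
                have := hd2 e heE e₀ (hEΓsub he₀Γ) hetgt htgt hc
                rw [this] at heΓ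
                exact heΓ he₀Γ
              · intro hc
                exact (hd6 e₀ (hEΓsub he₀Γ) u huU htgt huatt) hc.symm
          obtain ⟨g, hgval, hgord, hgreg, hgnc⟩ := mob q₀ pL hq₀pL μ
          refine ⟨g, hgval, ?_, ⟨fun _ => hφℓ, fun _ => hgnc⟩⟩
          intro q
          by_cases hq : q = q₀
          · subst hq
            have : ((-1 : ℤ) : ℝ) ≤ (ordAt g q : ℝ) := by exact_mod_cast hgord
            push_cast at this
            linarith
          · have h0 : (0 : ℝ) ≤ (ordAt g q : ℝ) := by exact_mod_cast hgreg q hq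
            have := Dcoef_nonneg G φ E' U' EΓ pS pT pU h ℓ q
            linarith
        · refine ⟨RatFunc.C μ, evalAt_C μ pL, ?_, ?_⟩
          · intro q
            rw [ordAt_C]
            have := Dcoef_nonneg G φ E' U' EΓ pS pT pU h ℓ q
            push_cast
            linarith
          · exact ⟨fun hc => absurd ⟨μ, rfl⟩ hc, fun hh => absurd hh hφℓ⟩
      obtain ⟨g, hgval, hgdiv, hgnc⟩ := hgex
      refine ⟨Function.update f' ℓ g, ?_, ?_, ?_⟩
      · intro v hvP q
        by_cases hvℓ : v = ℓ
        · subst hvℓ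
          rw [Function.update_self]
          exact hgdiv q
        · rw [Function.update_of_ne hvℓ]
          have hvP' : v ∈ PΓ' := Finset.mem_erase.mpr ⟨hvℓ, hvP⟩
          have := hdiv' v hvP' q
          rwa [Dcoef_erase_eq G φ E' U' EΓ pS pT pU h e₀ hs0 ht0 v q] at this
      · intro e heΓ
        by_cases he0 : e = e₀
        · rw [he0]
          rcases hends with ⟨hsrc, htgt⟩ | ⟨hsrc, htgt⟩
          · rw [hsrc, htgt, Function.update_self, Function.update_of_ne hoℓ]
            rw [show pS e₀ = pL from by rw [hpL, if_pos hsrc],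
              show pT e₀ = pO from by rw [hpO, if_pos hsrc]]
            rw [hgval]
          · have hsrcne : ¬ G.src e₀ = ℓ := by rw [hsrc]; exact hoℓ
            rw [hsrc, htgt, Function.update_self, Function.update_of_ne hoℓ]
            rw [show pS e₀ = pO from by rw [hpO, if_neg hsrcne],
              show pT e₀ = pL from by rw [hpL, if_neg hsrcne]]
            rw [hgval]
        · have heΓ' : e ∈ EΓ' := Finset.mem_erase.mpr ⟨he0, heΓ⟩
          have h1 := hEΓ'' e heΓ'
          rw [Function.update_of_ne (Finset.mem_erase.mp h1.1).1,
            Function.update_of_ne (Finset.mem_erase.mp h1.2).1]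
          exact hmatch' e heΓ'
      · intro v hvP
        by_cases hvℓ : v = ℓ
        · subst hvℓ
          rw [Function.update_self]
          exact hgnc
        · rw [Function.update_of_ne hvℓ]
          exact hnc' v (Finset.mem_erase.mpr ⟨hvℓ, hvP⟩)



open TropGraph in
/-- Tree case: suppose `Γ` is a tree, so that the nodal curve `(C_Γ)₀`
has arithmetic genus 0.  Then `φ` is `C₀`-ample on `Γ` in `Γ'` if and only if
`deg(D_φ|_{ℙ¹_v}) ≥ 1` for every vertex `v` of `Γ` with `φ(v) = h`,
where `h = min_{v ∈ V(Γ)} φ(v)`. -/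
theorem c0ample_iff_tree
    {n : ℕ} (G : TropGraph n) (φ : TropGraph.PL G)
    (P' : Finset G.V) (E' : Finset G.BE) (U' : Finset G.UE)
    (PΓ : Finset G.V) (EΓ : Finset G.BE) (hΓne : PΓ.Nonempty)
    (pS pT : G.BE → Option ℂ) (pU : G.UE → Option ℂ)
    -- Γ' = (P', E', U') is a subgraph of Σ
    (hE' : ∀ e ∈ E', G.src e ∈ P' ∧ G.tgt e ∈ P')
    (hU' : ∀ u ∈ U', G.att u ∈ P')
    -- Γ = (PΓ, EΓ) is a bounded connected subgraph of Γ'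
    (hPΓ : ∀ w ∈ PΓ, w ∈ P') (hEΓsub : EΓ ⊆ E')
    (hEΓ : ∀ e ∈ EΓ, G.src e ∈ PΓ ∧ G.tgt e ∈ PΓ)
    (hΓconn : ∀ a ∈ PΓ, ∀ b ∈ PΓ, Relation.ReflTransGen
      (fun a b => ∃ e ∈ EΓ, (G.src e = a ∧ G.tgt e = b) ∨ (G.src e = b ∧ G.tgt e = a)) a b)
    -- Γ is contained in the interior of Γ': no vertex of Γ is incident to an
    -- edge of Σ not in Γ'
    (hinter : ∀ w ∈ PΓ, (∀ e : G.BE, (G.src e = w ∨ G.tgt e = w) → e ∈ E') ∧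
      ∀ u : G.UE, G.att u = w → u ∈ U')
    -- for each vertex v of Γ, the chosen node and boundary points on the
    -- component ℙ¹_v are pairwise distinct
    (hdist : ∀ v ∈ PΓ,
      (∀ e₁ ∈ E', ∀ e₂ ∈ E', G.src e₁ = v → G.src e₂ = v → pS e₁ = pS e₂ → e₁ = e₂) ∧
      (∀ e₁ ∈ E', ∀ e₂ ∈ E', G.tgt e₁ = v → G.tgt e₂ = v → pT e₁ = pT e₂ → e₁ = e₂) ∧
      (∀ u₁ ∈ U', ∀ u₂ ∈ U', G.att u₁ = v → G.att u₂ = v → pU u₁ = pU u₂ → u₁ = u₂) ∧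
      (∀ e₁ ∈ E', ∀ e₂ ∈ E', G.src e₁ = v → G.tgt e₂ = v → pS e₁ ≠ pT e₂) ∧
      (∀ e₁ ∈ E', ∀ u ∈ U', G.src e₁ = v → G.att u = v → pS e₁ ≠ pU u) ∧
      (∀ e₁ ∈ E', ∀ u ∈ U', G.tgt e₁ = v → G.att u = v → pT e₁ ≠ pU u))
    -- Γ is a tree: connected (above) and acyclic
    (hacyc : EΓ.card + 1 = PΓ.card) :
    C0Ample G φ PΓ E' U' EΓ pS pT pU (PΓ.inf' hΓne φ.val) ↔
      ∀ v ∈ PΓ, φ.val v = PΓ.inf' hΓne φ.val →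
        1 ≤ DdegAt G φ E' U' EΓ (PΓ.inf' hΓne φ.val) v := by
  set h := PΓ.inf' hΓne φ.val with hh
  constructor
  · rintro ⟨f, hdiv, -, hnc⟩ v hvP hφv
    have hncv := (hnc v hvP).mpr hφv
    obtain ⟨q, hq⟩ := exists_pole_of_nonconst hncv
    have h1 := hdiv v hvP q
    have h2 : (ordAt (f v) q : ℝ) ≤ -1 := by exact_mod_cast hq
    have h3 : 1 ≤ Dcoef G φ E' U' EΓ pS pT pU h v q := by linarith
    linarith [Dcoef_le_DdegAt G φ E' U' EΓ pS pT pU h v q]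
  · intro hdeg
    exact aux_c0ample G φ E' U' pS pT pU h PΓ.card PΓ EΓ le_rfl hΓne hEΓsub hEΓ hΓconn
      hacyc hdist (fun v hv => Finset.inf'_le _ hv) hdeg
end
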